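/- arXiv:1202.6352 — 4 statements merged into one kernel-verified Lean document; each statement's English description precedes it below -/
import Mathlib

section
/- Let P be a quantifier-free (propositional) G△ formula. For every valuation v such that the value of P under v is strictly less than 1, and every real number c with 0 < c < 1, there exists a valuation v_c such that the value of P under v_c is at most c. -/
/-- The unit interval `[0,1]` is a complete lattice. -/
instance : Fact ((0:ℝ) ≤ 1) := ⟨zero_le_one⟩

/-- Gödel implication on `[0,1]`. -/
noncomputable def gimp (a b : unitInterval) : unitInterval := if a ≤ b then 1 else b

/-- Gödel negation on `[0,1]`. -/
noncomputable def gneg (a : unitInterval) : unitInterval := gimp a 0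

/-- The projection `△` on `[0,1]`. -/
noncomputable def gdelta (a : unitInterval) : unitInterval := if a = 1 then 1 else 0

/-- Propositional G△ formulas over a set `α` of atoms. -/
inductive GProp (α : Type) : Type where
  | bot : GProp α
  | top : GProp α
  | atom (a : α) : GProp α
  | and (A B : GProp α) : GProp α
  | or (A B : GProp α) : GProp α
  | imp (A B : GProp α) : GProp α
  | delta (A : GProp α) : GProp α

/-- The Gödel value of a propositional G△ formula under a valuation of the atoms. -/
noncomputable def GProp.val {α : Type} (v : α → unitInterval) : GProp α → unitInterval
  | .bot => 0
  | .top => 1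
  | .atom a => v a
  | .and A B => min (A.val v) (B.val v)
  | .or A B => max (A.val v) (B.val v)
  | .imp A B => gimp (A.val v) (B.val v)
  | .delta A => gdelta (A.val v)

noncomputable def shrink (c : ℝ) (hc0 : 0 < c) (hc1 : c < 1) (x : unitInterval) : unitInterval :=
  if x = 1 then 1 else ⟨c * x, mul_nonneg hc0.le x.2.1,
    le_trans (mul_le_of_le_one_right hc0.le x.2.2) hc1.le⟩

lemma shrink_strictMono (c : ℝ) (hc0 : 0 < c) (hc1 : c < 1) :
    StrictMono (shrink c hc0 hc1) := by
  intro a b hab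
  unfold shrink
  have ha : a ≠ 1 := fun h => absurd hab (by simp [h, not_lt.2 b.2.2, ← Subtype.coe_lt_coe, h])
  rw [if_neg ha]
  by_cases hb : b = 1
  · rw [if_pos hb]
    exact Subtype.mk_lt_mk.2 (lt_of_le_of_lt (mul_le_of_le_one_right hc0.le a.2.2) hc1)
  · rw [if_neg hb]
    exact Subtype.mk_lt_mk.2 (by
      have : (a:ℝ) < b := hab
      nlinarith)

lemma shrink_val (c : ℝ) (hc0 : 0 < c) (hc1 : c < 1) {α : Type} (v : α → unitInterval)
    (P : GProp α) :
    GProp.val (fun a => shrink c hc0 hc1 (v a)) P = shrink c hc0 hc1 (GProp.val v P) := by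
  set f := shrink c hc0 hc1 with hf
  have hmono := shrink_strictMono c hc0 hc1
  have hle : ∀ a b : unitInterval, f a ≤ f b ↔ a ≤ b := fun a b =>
    ⟨fun h => (hmono.le_iff_le).1 h, fun h => hmono.monotone h⟩
  have hone : ∀ a : unitInterval, f a = 1 ↔ a = 1 := by
    intro a
    constructor
    · intro h
      by_contra ha
      have : f a < f 1 := hmono (lt_of_le_of_ne (Subtype.coe_le_coe.1 a.2.2) ha)
      rw [h] at this
      have hf1 : f 1 = 1 := by simp [hf, shrink]
      rw [hf1] at this; exact lt_irrefl _ this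
    · intro h; subst h; simp [hf, shrink]
  have hf1 : f 1 = 1 := by simp [hf, shrink]
  have hf0 : f 0 = 0 := by
    simp only [hf, shrink]
    rw [if_neg (by norm_num [← Subtype.coe_ne_coe] : (0:unitInterval) ≠ 1)]
    ext; simp
  induction P with
  | bot => simpa [GProp.val] using hf0.symm
  | top => simpa [GProp.val] using hf1.symm
  | atom a => rfl
  | and A B ihA ihB =>
      simp only [GProp.val, ihA, ihB]
      exact (hmono.monotone.map_min).symm
  | or A B ihA ihB =>
      simp only [GProp.val, ihA, ihB]
      exact (hmono.monotone.map_max).symm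
  | imp A B ihA ihB =>
      simp only [GProp.val, ihA, ihB, gimp]
      by_cases h : GProp.val v A ≤ GProp.val v B
      · rw [if_pos h, if_pos ((hle _ _).2 h), hf1]
      · rw [if_neg h, if_neg (fun h' => h ((hle _ _).1 h'))]
  | delta A ihA =>
      simp only [GProp.val, ihA, gdelta]
      by_cases h : GProp.val v A = 1
      · rw [if_pos h, if_pos ((hone _).2 h), hf1]
      · rw [if_neg h, if_neg (fun h' => h ((hone _).1 h')), hf0]

/-- if a quantifier-free G△ formula takes a value `< 1` under some valuation,
then for every real `c` with `0 < c < 1` there is a valuation under which its value is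
at most `c`. -/
theorem gval_lt_one_pushdown {α : Type} (P : GProp α) (v : α → unitInterval)
    (hv : GProp.val v P < 1) (c : ℝ) (hc0 : 0 < c) (hc1 : c < 1) :
    ∃ vc : α → unitInterval, (GProp.val vc P : ℝ) ≤ c := by
  refine ⟨fun a => shrink c hc0 hc1 (v a), ?_⟩
  rw [shrink_val]
  have hne : GProp.val v P ≠ 1 := ne_of_lt hv
  simp only [shrink, if_neg hne]
  exact mul_le_of_le_one_right hc0.le (GProp.val v P).2.2
end

section
/- Herbrand's theorem for prenex G△: let P(x̄) be a quantifier-free formula of first-order Gödel logic with △ with free variables x̄. If ∃x̄ P(x̄) is valid, then there exist finitely many tuples t̄₁, …, t̄ₙ of terms from the Herbrand universe U(P) such that the disjunction P(t̄₁) ∨ ⋯ ∨ P(t̄ₙ) is valid. -/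
/-- A first-order signature: function symbols and predicate symbols with arities. -/
structure Signature : Type 1 where
  Func : Type
  fArity : Func → ℕ
  Pred : Type
  pArity : Pred → ℕ

/-- Terms over a signature; variables are indexed by natural numbers. -/
inductive Term (S : Signature) : Type where
  | var (n : ℕ) : Term S
  | func (f : S.Func) (args : Fin (S.fArity f) → Term S) : Term S

namespace Term

variable {S : Signature}

/-- The set of variables occurring in a term. -/
def vars : Term S → Set ℕ
  | .var n => {n}
  | .func _ args => ⋃ i, (args i).vars

/-- The set of function symbols (including constants) occurring in a term. -/
def funcsIn : Term S → Set S.Func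
  | .var _ => ∅
  | .func f args => insert f (⋃ i, (args i).funcsIn)

/-- A term is ground if it contains no variables. -/
def isGround : Term S → Prop
  | .var _ => False
  | .func _ args => ∀ i, (args i).isGround

/-- Simultaneous substitution of terms for variables in a term. -/
def subst (σ : ℕ → Term S) : Term S → Term S
  | .var n => σ n
  | .func f args => .func f (fun i => (args i).subst σ)

end Term

/-- Formulas of first-order Gödel logic with `△`. -/
inductive Formula (S : Signature) : Type where
  | bot : Formula S
  | top : Formula S
  | atom (p : S.Pred) (args : Fin (S.pArity p) → Term S) : Formula S
  | and (A B : Formula S) : Formula S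
  | or (A B : Formula S) : Formula S
  | imp (A B : Formula S) : Formula S
  | delta (A : Formula S) : Formula S
  | all (x : ℕ) (A : Formula S) : Formula S
  | ex (x : ℕ) (A : Formula S) : Formula S

namespace Formula

variable {S : Signature}

/-- Gödel negation `¬A := A → ⊥`. -/
def neg (A : Formula S) : Formula S := A.imp .bot

/-- The set of free variables of a formula. -/
def freeVars : Formula S → Set ℕ
  | .bot => ∅
  | .top => ∅
  | .atom _ args => ⋃ i, (args i).vars
  | .and A B => A.freeVars ∪ B.freeVars
  | .or A B => A.freeVars ∪ B.freeVars
  | .imp A B => A.freeVars ∪ B.freeVars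
  | .delta A => A.freeVars
  | .all x A => A.freeVars \ {x}
  | .ex x A => A.freeVars \ {x}

/-- The set of function symbols occurring in a formula. -/
def funcsIn : Formula S → Set S.Func
  | .bot => ∅
  | .top => ∅
  | .atom _ args => ⋃ i, (args i).funcsIn
  | .and A B => A.funcsIn ∪ B.funcsIn
  | .or A B => A.funcsIn ∪ B.funcsIn
  | .imp A B => A.funcsIn ∪ B.funcsIn
  | .delta A => A.funcsIn
  | .all _ A => A.funcsIn
  | .ex _ A => A.funcsIn

/-- The set of predicate symbols occurring in a formula. -/
def predsIn : Formula S → Set S.Pred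
  | .bot => ∅
  | .top => ∅
  | .atom p _ => {p}
  | .and A B => A.predsIn ∪ B.predsIn
  | .or A B => A.predsIn ∪ B.predsIn
  | .imp A B => A.predsIn ∪ B.predsIn
  | .delta A => A.predsIn
  | .all _ A => A.predsIn
  | .ex _ A => A.predsIn

/-- A formula is quantifier free. -/
def isQF : Formula S → Prop
  | .bot => True
  | .top => True
  | .atom _ _ => True
  | .and A B => A.isQF ∧ B.isQF
  | .or A B => A.isQF ∧ B.isQF
  | .imp A B => A.isQF ∧ B.isQF
  | .delta A => A.isQF
  | .all _ _ => False
  | .ex _ _ => False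

/-- Simultaneous substitution of terms for the free variables of a formula
(bound variables are left untouched). -/
def subst (σ : ℕ → Term S) : Formula S → Formula S
  | .bot => .bot
  | .top => .top
  | .atom p args => .atom p (fun i => (args i).subst σ)
  | .and A B => .and (A.subst σ) (B.subst σ)
  | .or A B => .or (A.subst σ) (B.subst σ)
  | .imp A B => .imp (A.subst σ) (B.subst σ)
  | .delta A => .delta (A.subst σ)
  | .all x A => .all x (A.subst (Function.update σ x (.var x)))
  | .ex x A => .ex x (A.subst (Function.update σ x (.var x)))

/-- Substitution of a single term `t` for the variable `x`. -/
def subst1 (x : ℕ) (t : Term S) (A : Formula S) : Formula S :=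
  A.subst (fun n => if n = x then t else .var n)

end Formula

/-- An interpretation: a nonempty domain, interpretations of the function symbols,
and `[0,1]`-valued interpretations of the predicate symbols. -/
structure Interp (S : Signature) : Type 1 where
  D : Type
  dNe : Nonempty D
  fI : ∀ f : S.Func, (Fin (S.fArity f) → D) → D
  pI : ∀ p : S.Pred, (Fin (S.pArity p) → D) → unitInterval

attribute [instance] Interp.dNe

/-- Evaluation of a term in an interpretation under a variable assignment. -/
def Term.eval {S : Signature} (I : Interp S) (μ : ℕ → I.D) : Term S → I.D
  | .var n => μ n
  | .func f args => I.fI f (fun i => (args i).eval I μ)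

/-- The Gödel value `‖A‖ ∈ [0,1]` of a formula in an interpretation under a variable
assignment; `∀` is interpreted by the infimum and `∃` by the supremum. -/
noncomputable def Formula.val {S : Signature} (I : Interp S) (μ : ℕ → I.D) :
    Formula S → unitInterval
  | .bot => 0
  | .top => 1
  | .atom p args => I.pI p (fun i => (args i).eval I μ)
  | .and A B => min (A.val I μ) (B.val I μ)
  | .or A B => max (A.val I μ) (B.val I μ)
  | .imp A B => gimp (A.val I μ) (B.val I μ)
  | .delta A => gdelta (A.val I μ)
  | .all x A => ⨅ d : I.D, A.val I (Function.update μ x d)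
  | .ex x A => ⨆ d : I.D, A.val I (Function.update μ x d)

/-- A formula is valid if it takes value `1` in every interpretation, under every
variable assignment. -/
def valid {S : Signature} (A : Formula S) : Prop :=
  ∀ (I : Interp S) (μ : ℕ → I.D), A.val I μ = 1

/-- A formula is 1-satisfiable if it takes value `1` in some interpretation. -/
def sat1 {S : Signature} (A : Formula S) : Prop :=
  ∃ (I : Interp S) (μ : ℕ → I.D), A.val I μ = 1

/-- `exCloseList [x₁,…,xₙ] P = ∃x₁ … ∃xₙ P`. -/
def exCloseList {S : Signature} : List ℕ → Formula S → Formula S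
  | [], P => P
  | x :: xs, P => .ex x (exCloseList xs P)

/-- `allCloseList [x₁,…,xₙ] P = ∀x₁ … ∀xₙ P`. -/
def allCloseList {S : Signature} : List ℕ → Formula S → Formula S
  | [], P => P
  | x :: xs, P => .all x (allCloseList xs P)

/-- `buildPrenex [Q₁,…,Qₙ] i P = Q₁ zᵢ Q₂ z_{i+1} … Qₙ z_{i+n-1} P`, where `true`
codes `∀` and `false` codes `∃`; the bound variables are the indices `i, i+1, …`. -/
def buildPrenex {S : Signature} : List Bool → ℕ → Formula S → Formula S
  | [], _, P => P
  | b :: rest, i, P =>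
      if b then .all i (buildPrenex rest (i + 1) P)
      else .ex i (buildPrenex rest (i + 1) P)

/-- The positions (= variables) of the existential quantifiers in a prenex prefix. -/
def exPos (pref : List Bool) : List ℕ :=
  (List.range pref.length).filter (fun i => pref.getD i true = false)

/-- The positions (= variables) of the universal quantifiers in a prenex prefix. -/
def univPos (pref : List Bool) : List ℕ :=
  (List.range pref.length).filter (fun i => pref.getD i false = true)

/-- `bigOr A [B₁,…,Bₙ] = A ∨ B₁ ∨ … ∨ Bₙ`. -/
def bigOr {S : Signature} : Formula S → List (Formula S) → Formula S
  | A, [] => A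
  | A, B :: rest => .or A (bigOr B rest)

/-- `bigAnd A [B₁,…,Bₙ] = A ∧ B₁ ∧ … ∧ Bₙ`. -/
def bigAnd {S : Signature} : Formula S → List (Formula S) → Formula S
  | A, [] => A
  | A, B :: rest => .and A (bigAnd B rest)
namespace HerbAux

open Formula

/-! ### Basic facts about the unit interval -/

lemma ui_zero_le (x : unitInterval) : 0 ≤ x := x.2.1
lemma ui_le_one (x : unitInterval) : x ≤ 1 := x.2.2
lemma ui_eq_one_of_one_le {x : unitInterval} (h : 1 ≤ x) : x = 1 :=
  le_antisymm (ui_le_one x) h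
lemma ui_eq_zero_of_le_zero {x : unitInterval} (h : x ≤ 0) : x = 0 :=
  le_antisymm h (ui_zero_le x)
lemma ui_zero_ne_one : (0 : unitInterval) ≠ 1 := by
  intro h
  have := congrArg (Subtype.val) h
  norm_num at this
lemma ui_not_one_le_zero : ¬ ((1:unitInterval) ≤ 0) := fun h =>
  ui_zero_ne_one (le_antisymm (ui_zero_le 1) h)

/-- The "half" rescaling of the unit interval: fixes `1`, halves everything else. -/
noncomputable def half (x : unitInterval) : unitInterval :=
  if x = 1 then 1 else ⟨(x : ℝ) / 2, by
    constructor
    · have := x.2.1; linarith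
    · have := x.2.2; linarith⟩

noncomputable def halfone : unitInterval := ⟨1/2, by norm_num⟩

lemma half_lt_one {x : unitInterval} (hx : x ≠ 1) : half x ≤ halfone := by
  rw [half, if_neg hx]
  have hx1 : (x : ℝ) ≤ 1 := x.2.2
  exact Subtype.mk_le_mk.2 (by norm_num [halfone]; linarith)

lemma not_one_le_halfone : ¬ ((1:unitInterval) ≤ halfone) := by
  intro h
  have := Subtype.coe_le_coe.2 h
  norm_num [halfone] at this

lemma half_one : half 1 = 1 := by simp [half]

lemma half_zero : half 0 = 0 := by
  rw [half, if_neg ui_zero_ne_one]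
  ext; norm_num

lemma coe_lt_one_of_ne_one {x : unitInterval} (hx : x ≠ 1) : (x:ℝ) < 1 :=
  lt_of_le_of_ne x.2.2 (fun h => hx (Subtype.ext (by simpa using h)))

lemma half_le_half_iff (x y : unitInterval) : x ≤ y ↔ half x ≤ half y := by
  by_cases hx : x = 1 <;> by_cases hy : y = 1
  · simp [hx, hy]
  · subst hx
    simp only [half, if_pos rfl, if_neg hy]
    constructor
    · intro h; exact absurd (ui_eq_one_of_one_le h) hy
    · intro h
      exfalso
      have h' : (1:ℝ) ≤ (y:ℝ)/2 := Subtype.coe_le_coe.2 h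
      have := coe_lt_one_of_ne_one hy
      linarith
  · subst hy
    simp only [half, if_neg hx, if_pos rfl]
    constructor
    · intro _; exact ui_le_one _
    · intro _; exact ui_le_one _
  · rw [half, half, if_neg hx, if_neg hy]
    rw [Subtype.mk_le_mk, ← Subtype.coe_le_coe]
    constructor <;> intro h <;> linarith

lemma half_eq_one_iff (x : unitInterval) : half x = 1 ↔ x = 1 := by
  constructor
  · intro h
    by_contra hx
    rw [half, if_neg hx] at h
    have := congrArg Subtype.val h
    have hx1 := coe_lt_one_of_ne_one hx
    norm_num at this
    linarith
  · intro h; simp [h, half_one]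

end HerbAux
namespace HerbAux

variable {S : Signature}

/-! ### Substitution and congruence lemmas -/

lemma term_eval_subst (I : Interp S) (μ : ℕ → I.D) (σ : ℕ → Term S) (t : Term S) :
    (t.subst σ).eval I μ = t.eval I (fun n => (σ n).eval I μ) := by
  induction t with
  | var n => rfl
  | func f args ih =>
      simp only [Term.subst, Term.eval]
      congr 1
      funext i
      exact ih i

lemma val_subst (I : Interp S) (μ : ℕ → I.D) (σ : ℕ → Term S) :
    ∀ A : Formula S, A.isQF →
      (A.subst σ).val I μ = A.val I (fun n => (σ n).eval I μ) := by
  intro A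
  induction A with
  | bot => intro _; rfl
  | top => intro _; rfl
  | atom p args =>
      intro _
      simp only [Formula.subst, Formula.val]
      congr 1
      funext i
      exact term_eval_subst I μ σ (args i)
  | and A B ihA ihB =>
      intro h
      simp only [Formula.subst, Formula.val, ihA h.1, ihB h.2]
  | or A B ihA ihB =>
      intro h
      simp only [Formula.subst, Formula.val, ihA h.1, ihB h.2]
  | imp A B ihA ihB =>
      intro h
      simp only [Formula.subst, Formula.val, ihA h.1, ihB h.2]
  | delta A ihA =>
      intro h
      simp only [Formula.subst, Formula.val, ihA h]
  | all x A ih => intro h; exact absurd h id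
  | ex x A ih => intro h; exact absurd h id

lemma term_eval_congr (I : Interp S) (μ₁ μ₂ : ℕ → I.D) (t : Term S)
    (h : ∀ n ∈ t.vars, μ₁ n = μ₂ n) : t.eval I μ₁ = t.eval I μ₂ := by
  induction t with
  | var n => exact h n rfl
  | func f args ih =>
      simp only [Term.eval]
      congr 1
      funext i
      exact ih i (fun n hn => h n (Set.mem_iUnion.2 ⟨i, hn⟩))

lemma val_congr (I : Interp S) (μ₁ μ₂ : ℕ → I.D) :
    ∀ A : Formula S, A.isQF → (∀ n ∈ A.freeVars, μ₁ n = μ₂ n) →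
      A.val I μ₁ = A.val I μ₂ := by
  intro A
  induction A with
  | bot => intro _ _; rfl
  | top => intro _ _; rfl
  | atom p args =>
      intro _ h
      simp only [Formula.val]
      congr 1
      funext i
      exact term_eval_congr I μ₁ μ₂ (args i)
        (fun n hn => h n (Set.mem_iUnion.2 ⟨i, hn⟩))
  | and A B ihA ihB =>
      intro hq h
      simp only [Formula.val,
        ihA hq.1 (fun n hn => h n (Or.inl hn)), ihB hq.2 (fun n hn => h n (Or.inr hn))]
  | or A B ihA ihB =>
      intro hq h
      simp only [Formula.val,
        ihA hq.1 (fun n hn => h n (Or.inl hn)), ihB hq.2 (fun n hn => h n (Or.inr hn))]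
  | imp A B ihA ihB =>
      intro hq h
      simp only [Formula.val,
        ihA hq.1 (fun n hn => h n (Or.inl hn)), ihB hq.2 (fun n hn => h n (Or.inr hn))]
  | delta A ihA =>
      intro hq h
      simp only [Formula.val, ihA hq h]
  | all x A ih => intro h; exact absurd h id
  | ex x A ih => intro h; exact absurd h id

/-! ### Finiteness of symbol sets -/

lemma term_funcsIn_finite (t : Term S) : t.funcsIn.Finite := by
  induction t with
  | var n => exact Set.finite_empty
  | func f args ih => exact Set.Finite.insert f (Set.finite_iUnion ih)

lemma funcsIn_finite (A : Formula S) : A.funcsIn.Finite := by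
  induction A with
  | bot => exact Set.finite_empty
  | top => exact Set.finite_empty
  | atom p args => exact Set.finite_iUnion (fun i => term_funcsIn_finite (args i))
  | and A B ihA ihB => exact ihA.union ihB
  | or A B ihA ihB => exact ihA.union ihB
  | imp A B ihA ihB => exact ihA.union ihB
  | delta A ihA => exact ihA
  | all x A ihA => exact ihA
  | ex x A ihA => exact ihA

lemma predsIn_finite (A : Formula S) : A.predsIn.Finite := by
  induction A with
  | bot => exact Set.finite_empty
  | top => exact Set.finite_empty
  | atom p args => exact Set.finite_singleton p
  | and A B ihA ihB => exact ihA.union ihB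
  | or A B ihA ihB => exact ihA.union ihB
  | imp A B ihA ihB => exact ihA.union ihB
  | delta A ihA => exact ihA
  | all x A ihA => exact ihA
  | ex x A ihA => exact ihA

/-! ### `exCloseList` and `bigOr` -/

lemma exCloseList_le (I : Interp S) (A : Formula S) (c : unitInterval)
    (h : ∀ μ : ℕ → I.D, A.val I μ ≤ c) :
    ∀ (l : List ℕ) (μ : ℕ → I.D), (exCloseList l A).val I μ ≤ c := by
  intro l
  induction l with
  | nil => exact h
  | cons x xs ih =>
      intro μ
      show (Formula.ex x (exCloseList xs A)).val I μ ≤ c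
      simp only [Formula.val]
      exact iSup_le fun d => ih _

lemma le_bigOr (I : Interp S) (μ : ℕ → I.D) :
    ∀ (l : List (Formula S)) (A : Formula S),
      A.val I μ ≤ (bigOr A l).val I μ ∧
      ∀ B ∈ l, B.val I μ ≤ (bigOr A l).val I μ := by
  intro l
  induction l with
  | nil =>
      intro A
      exact ⟨le_refl _, fun B hB => absurd hB List.not_mem_nil⟩
  | cons C r ih =>
      intro A
      constructor
      · show A.val I μ ≤ (Formula.or A (bigOr C r)).val I μ
        simp only [Formula.val]
        exact le_max_left _ _
      · intro B hB
        show B.val I μ ≤ (Formula.or A (bigOr C r)).val I μ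
        simp only [Formula.val]
        rcases List.mem_cons.1 hB with h | h
        · subst h; exact le_trans (ih B).1 (le_max_right _ _)
        · exact le_trans ((ih C).2 B h) (le_max_right _ _)

end HerbAux
namespace HerbAux

variable {S : Signature}

/-! ### Countability of the set of ground terms over a countable set of symbols -/

noncomputable def tcode (ι : S.Func → ℕ) : Term S → ℕ
  | .var n => Nat.pair 0 n
  | .func f args =>
      Nat.pair 1 (Nat.pair (ι f) (Encodable.encode (List.ofFn fun i => tcode ι (args i))))

lemma tcode_inj (Φ : Set S.Func) (ι : S.Func → ℕ)
    (hι : ∀ f ∈ Φ, ∀ g ∈ Φ, ι f = ι g → f = g) :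
    ∀ t : Term S, t.funcsIn ⊆ Φ → ∀ s : Term S, s.funcsIn ⊆ Φ →
      tcode ι t = tcode ι s → t = s := by
  intro t
  induction t with
  | var n =>
      intro _ s hs h
      cases s with
      | var m =>
          simp only [tcode, Nat.pair_eq_pair] at h
          rw [h.2]
      | func g args =>
          simp only [tcode, Nat.pair_eq_pair] at h
          exact (Nat.zero_ne_one h.1).elim
  | func f args ih =>
      intro ht s hs h
      cases s with
      | var m =>
          simp only [tcode, Nat.pair_eq_pair] at h
          exact (Nat.one_ne_zero h.1).elim
      | func g args' =>
          simp only [tcode, Nat.pair_eq_pair] at h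
          have hf : f ∈ Φ := ht (Set.mem_insert _ _)
          have hg : g ∈ Φ := hs (Set.mem_insert _ _)
          have hfg : f = g := hι f hf g hg h.2.1
          subst hfg
          have hlist := Encodable.encode_injective h.2.2
          have hfn : (fun i => tcode ι (args i)) = fun i => tcode ι (args' i) :=
            List.ofFn_injective hlist
          have : args = args' := by
            funext i
            exact ih i (fun x hx => ht (Set.mem_insert_iff.2 (Or.inr (Set.mem_iUnion.2 ⟨i, hx⟩))))
              (args' i) (fun x hx => hs (Set.mem_insert_iff.2 (Or.inr (Set.mem_iUnion.2 ⟨i, hx⟩))))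
              (congrFun hfn i)
          rw [this]

/-! ### The Herbrand term model -/

section TermModel

variable (Φ : Set S.Func) (c0 : S.Func)

/-- The Herbrand universe: ground terms built from symbols in `Φ`. -/
def HU : Type := {t : Term S // t.isGround ∧ t.funcsIn ⊆ Φ}

/-- The canonical ground constant term. -/
def c0t (hc0 : S.fArity c0 = 0) : Term S := .func c0 (fun i => (i.cast hc0).elim0)

lemma c0t_ground (hc0 : S.fArity c0 = 0) : (c0t c0 hc0 : Term S).isGround := fun i => (i.cast hc0).elim0

lemma c0t_funcs (hc0 : S.fArity c0 = 0) (hc0Φ : c0 ∈ Φ) : (c0t c0 hc0 : Term S).funcsIn ⊆ Φ := by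
  intro x hx
  rcases Set.mem_insert_iff.1 hx with h | h
  · exact h ▸ hc0Φ
  · rcases Set.mem_iUnion.1 h with ⟨i, _⟩
    exact (i.cast hc0).elim0

def d0 (hc0 : S.fArity c0 = 0) (hc0Φ : c0 ∈ Φ) : HU Φ := ⟨c0t c0 hc0, c0t_ground c0 hc0, c0t_funcs Φ c0 hc0 hc0Φ⟩

lemma HU_countable (hΦ : Φ.Finite) : Countable (HU Φ) := by
  have : Countable ↥Φ := hΦ.countable.to_subtype
  obtain ⟨e⟩ := nonempty_embedding_nat ↥Φ
  classical
  set ι : S.Func → ℕ := fun f => if h : f ∈ Φ then e ⟨f, h⟩ else 0 with hι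
  have hinj : ∀ f ∈ Φ, ∀ g ∈ Φ, ι f = ι g → f = g := by
    intro f hf g hg h
    rw [hι] at h
    simp only [dif_pos hf, dif_pos hg] at h
    exact congrArg Subtype.val (e.injective h)
  have : Function.Injective (fun d : HU Φ => tcode ι d.val) := by
    intro a b h
    exact Subtype.ext (tcode_inj Φ ι hinj a.val a.2.2 b.val b.2.2 h)
  exact this.countable

/-- Interpretation of function symbols in the term model. -/
noncomputable def F0 (hc0 : S.fArity c0 = 0) (hc0Φ : c0 ∈ Φ) : ∀ f : S.Func, (Fin (S.fArity f) → HU Φ) → HU Φ := fun f args => by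
  classical
  exact if h : f ∈ Φ then
    ⟨.func f (fun i => (args i).val),
      fun i => (args i).2.1,
      by
        apply Set.insert_subset h
        exact Set.iUnion_subset fun i => (args i).2.2⟩
  else d0 Φ c0 hc0 hc0Φ

/-- The term model with predicate valuation `v`. -/
noncomputable def Jmod (hc0 : S.fArity c0 = 0) (hc0Φ : c0 ∈ Φ) (v : ∀ p : S.Pred, (Fin (S.pArity p) → HU Φ) → unitInterval) :
    Interp S :=
  { D := HU Φ
    dNe := ⟨d0 Φ c0 hc0 hc0Φ⟩
    fI := F0 Φ c0 hc0 hc0Φ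
    pI := v }

end TermModel

end HerbAux
namespace HerbAux

variable {S : Signature}

section TermModel2

variable (Φ : Set S.Func) (c0 : S.Func) (hc0 : S.fArity c0 = 0) (hc0Φ : c0 ∈ Φ)

/-- Atoms of the term model. -/
def TAtom : Type := Σ p : S.Pred, (Fin (S.pArity p) → HU Φ)

/-- Term model from an atom valuation. -/
noncomputable def JA (v : TAtom Φ → unitInterval) : Interp S :=
  Jmod Φ c0 hc0 hc0Φ (fun p args => v ⟨p, args⟩)

lemma eval_JA_indep (v w : TAtom Φ → unitInterval) (ν : ℕ → HU Φ) (t : Term S) :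
    t.eval (JA Φ c0 hc0 hc0Φ v) ν = t.eval (JA Φ c0 hc0 hc0Φ w) ν := by
  induction t with
  | var n => rfl
  | func f args ih =>
      show F0 Φ c0 hc0 hc0Φ f _ = F0 Φ c0 hc0 hc0Φ f _
      congr 1
      funext i
      exact ih i

lemma eval_JA_ground (v : TAtom Φ → unitInterval) (ν : ℕ → HU Φ) :
    ∀ (t : Term S) (hg : t.isGround) (hf : t.funcsIn ⊆ Φ),
      t.eval (JA Φ c0 hc0 hc0Φ v) ν = ⟨t, hg, hf⟩ := by
  intro t
  induction t with
  | var n => intro hg _; exact absurd hg id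
  | func f args ih =>
      intro hg hf
      have hfΦ : f ∈ Φ := hf (Set.mem_insert _ _)
      show F0 Φ c0 hc0 hc0Φ f (fun i => (args i).eval (JA Φ c0 hc0 hc0Φ v) ν) = _
      delta F0; beta_reduce; refine (dif_pos hfΦ).trans ?_
      apply Subtype.ext
      show Term.func f _ = Term.func f args
      congr 1
      funext i
      have := ih i (hg i) (fun x hx => hf (Set.mem_insert_iff.2 (Or.inr (Set.mem_iUnion.2 ⟨i, hx⟩))))
      rw [this]

/-- Pullback of an interpretation (with assignment) to a term-model atom valuation. -/
noncomputable def pull (I : Interp S) (μ : ℕ → I.D) : TAtom Φ → unitInterval :=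
  fun a => I.pI a.1 (fun i => (a.2 i).val.eval I μ)

lemma eval_push (I : Interp S) (μ : ℕ → I.D) (v : TAtom Φ → unitInterval)
    (ν : ℕ → HU Φ) :
    ∀ t : Term S, t.funcsIn ⊆ Φ →
      ((t.eval (JA Φ c0 hc0 hc0Φ v) ν)).val.eval I μ
        = t.eval I (fun n => (ν n).val.eval I μ) := by
  intro t
  induction t with
  | var n => intro _; rfl
  | func f args ih =>
      intro hf
      have hfΦ : f ∈ Φ := hf (Set.mem_insert _ _)
      show ((F0 Φ c0 hc0 hc0Φ f (fun i => (args i).eval (JA Φ c0 hc0 hc0Φ v) ν)).val).eval I μ = _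
      delta F0; beta_reduce; refine (congrArg (fun x : HU Φ => Term.eval I μ x.val) (dif_pos hfΦ)).trans ?_
      show Term.eval I μ (.func f _) = _
      simp only [Term.eval]
      congr 1
      funext i
      exact ih i (fun x hx => hf (Set.mem_insert_iff.2 (Or.inr (Set.mem_iUnion.2 ⟨i, hx⟩))))

lemma val_pull (I : Interp S) (μ : ℕ → I.D) :
    ∀ A : Formula S, A.isQF → A.funcsIn ⊆ Φ → ∀ ν : ℕ → HU Φ,
      A.val (JA Φ c0 hc0 hc0Φ (pull Φ I μ)) ν = A.val I (fun n => (ν n).val.eval I μ) := by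
  intro A
  induction A with
  | bot => intro _ _ _; rfl
  | top => intro _ _ _; rfl
  | atom p args =>
      intro _ hf ν
      simp only [Formula.val, JA, Jmod, pull]
      congr 1
      funext i
      exact eval_push Φ c0 hc0 hc0Φ I μ (pull Φ I μ) ν (args i)
        (fun x hx => hf (Set.mem_iUnion.2 ⟨i, hx⟩))
  | and A B ihA ihB =>
      intro hq hf ν
      simp only [Formula.val, ihA hq.1 (fun x hx => hf (Or.inl hx)) ν,
        ihB hq.2 (fun x hx => hf (Or.inr hx)) ν]
  | or A B ihA ihB =>
      intro hq hf ν
      simp only [Formula.val, ihA hq.1 (fun x hx => hf (Or.inl hx)) ν,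
        ihB hq.2 (fun x hx => hf (Or.inr hx)) ν]
  | imp A B ihA ihB =>
      intro hq hf ν
      simp only [Formula.val, ihA hq.1 (fun x hx => hf (Or.inl hx)) ν,
        ihB hq.2 (fun x hx => hf (Or.inr hx)) ν]
  | delta A ihA =>
      intro hq hf ν
      simp only [Formula.val, ihA hq hf ν]
  | all x A ih => intro h; exact absurd h id
  | ex x A ih => intro h; exact absurd h id

end TermModel2

end HerbAux
namespace HerbAux

variable {S : Signature}

section TermModel3

variable (Φ : Set S.Func) (c0 : S.Func) (hc0 : S.fArity c0 = 0) (hc0Φ : c0 ∈ Φ)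

/-- The set of term-model atoms relevant to evaluating a formula under an assignment. -/
noncomputable def atomsOf : Formula S → (ℕ → HU Φ) → Set (TAtom Φ)
  | .bot, _ => ∅
  | .top, _ => ∅
  | .atom p args, ν =>
      {⟨p, fun i => (args i).eval (JA Φ c0 hc0 hc0Φ (fun _ => 0)) ν⟩}
  | .and A B, ν => atomsOf A ν ∪ atomsOf B ν
  | .or A B, ν => atomsOf A ν ∪ atomsOf B ν
  | .imp A B, ν => atomsOf A ν ∪ atomsOf B ν
  | .delta A, ν => atomsOf A ν
  | .all _ _, _ => ∅
  | .ex _ _, _ => ∅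

lemma atomsOf_finite : ∀ (A : Formula S) (ν : ℕ → HU Φ),
    (atomsOf Φ c0 hc0 hc0Φ A ν).Finite := by
  intro A
  induction A with
  | bot => intro ν; exact Set.finite_empty
  | top => intro ν; exact Set.finite_empty
  | atom p args => intro ν; exact Set.finite_singleton _
  | and A B ihA ihB => intro ν; exact (ihA ν).union (ihB ν)
  | or A B ihA ihB => intro ν; exact (ihA ν).union (ihB ν)
  | imp A B ihA ihB => intro ν; exact (ihA ν).union (ihB ν)
  | delta A ihA => intro ν; exact ihA ν
  | all x A ihA => intro ν; exact Set.finite_empty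
  | ex x A ihA => intro ν; exact Set.finite_empty

lemma atomsOf_preds : ∀ (A : Formula S) (ν : ℕ → HU Φ),
    ∀ a ∈ atomsOf Φ c0 hc0 hc0Φ A ν, a.1 ∈ A.predsIn := by
  intro A
  induction A with
  | bot => intro ν a ha; simp only [atomsOf] at ha; exact absurd ha (Set.notMem_empty a)
  | top => intro ν a ha; simp only [atomsOf] at ha; exact absurd ha (Set.notMem_empty a)
  | atom p args =>
      intro ν a ha
      simp only [atomsOf, Set.mem_singleton_iff] at ha
      subst ha
      exact rfl
  | and A B ihA ihB =>
      intro ν a ha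
      rcases ha with h | h
      · exact Or.inl (ihA ν a h)
      · exact Or.inr (ihB ν a h)
  | or A B ihA ihB =>
      intro ν a ha
      rcases ha with h | h
      · exact Or.inl (ihA ν a h)
      · exact Or.inr (ihB ν a h)
  | imp A B ihA ihB =>
      intro ν a ha
      rcases ha with h | h
      · exact Or.inl (ihA ν a h)
      · exact Or.inr (ihB ν a h)
  | delta A ihA => intro ν a ha; exact ihA ν a ha
  | all x A ihA => intro ν a ha; simp only [atomsOf] at ha; exact absurd ha (Set.notMem_empty a)
  | ex x A ihA => intro ν a ha; simp only [atomsOf] at ha; exact absurd ha (Set.notMem_empty a)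

/-- The transfer relation between values under two valuations. -/
def Rel (v w : TAtom Φ → unitInterval) (Sset : Set (TAtom Φ)) (x y : unitInterval) : Prop :=
  (x = 0 ∧ y = 0) ∨ (x = 1 ∧ y = 1) ∨ ∃ a ∈ Sset, x = v a ∧ y = w a

section Transfer

variable (v w : TAtom Φ → unitInterval) (Sset : Set (TAtom Φ))

lemma Rel_le
    (hle : ∀ a ∈ Sset, ∀ b ∈ Sset, (v a ≤ v b ↔ w a ≤ w b))
    (h1 : ∀ a ∈ Sset, (v a = 1 ↔ w a = 1))
    (h0 : ∀ a ∈ Sset, (v a = 0 ↔ w a = 0))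
    {x y x' y' : unitInterval}
    (hxy : Rel Φ v w Sset x y) (hxy' : Rel Φ v w Sset x' y') : x ≤ x' ↔ y ≤ y' := by
  rcases hxy with ⟨hx, hy⟩ | ⟨hx, hy⟩ | ⟨a, ha, hx, hy⟩ <;>
    rcases hxy' with ⟨hx', hy'⟩ | ⟨hx', hy'⟩ | ⟨b, hb, hx', hy'⟩ <;>
    subst hx <;> subst hy <;> subst hx' <;> subst hy'
  · exact Iff.rfl
  · simp [ui_zero_le]
  · simp [ui_zero_le]
  · constructor
    · intro h; exact absurd h ui_not_one_le_zero
    · intro h; exact absurd h ui_not_one_le_zero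
  · exact Iff.rfl
  · constructor
    · intro h
      have := (h1 b hb).1 (ui_eq_one_of_one_le h)
      rw [this]
    · intro h
      have := (h1 b hb).2 (ui_eq_one_of_one_le h)
      rw [this]
  · constructor
    · intro h
      have := (h0 a ha).1 (ui_eq_zero_of_le_zero h)
      rw [this]
    · intro h
      have := (h0 a ha).2 (ui_eq_zero_of_le_zero h)
      rw [this]
  · simp [ui_le_one]
  · exact hle a ha b hb

lemma Rel_one (h1 : ∀ a ∈ Sset, (v a = 1 ↔ w a = 1)) {x y : unitInterval} (hxy : Rel Φ v w Sset x y) : x = 1 ↔ y = 1 := by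
  rcases hxy with ⟨hx, hy⟩ | ⟨hx, hy⟩ | ⟨a, ha, hx, hy⟩
  · subst hx; subst hy
    exact ⟨fun h => absurd h ui_zero_ne_one, fun h => absurd h ui_zero_ne_one⟩
  · subst hx; subst hy; exact Iff.rfl
  · subst hx; subst hy; exact h1 a ha

lemma val_transfer
    (hle : ∀ a ∈ Sset, ∀ b ∈ Sset, (v a ≤ v b ↔ w a ≤ w b))
    (h1 : ∀ a ∈ Sset, (v a = 1 ↔ w a = 1))
    (h0 : ∀ a ∈ Sset, (v a = 0 ↔ w a = 0)) :
    ∀ A : Formula S, A.isQF → ∀ ν : ℕ → HU Φ, atomsOf Φ c0 hc0 hc0Φ A ν ⊆ Sset →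
      Rel Φ v w Sset (A.val (JA Φ c0 hc0 hc0Φ v) ν) (A.val (JA Φ c0 hc0 hc0Φ w) ν) := by
  intro A
  induction A with
  | bot => intro _ ν _; exact Or.inl ⟨rfl, rfl⟩
  | top => intro _ ν _; exact Or.inr (Or.inl ⟨rfl, rfl⟩)
  | atom p args =>
      intro _ ν hsub
      refine Or.inr (Or.inr ⟨⟨p, fun i => (args i).eval (JA Φ c0 hc0 hc0Φ (fun _ => 0)) ν⟩,
        hsub rfl, ?_, ?_⟩)
      · show v ⟨p, fun i => (args i).eval (JA Φ c0 hc0 hc0Φ v) ν⟩ = _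
        rw [show (fun i => (args i).eval (JA Φ c0 hc0 hc0Φ v) ν)
            = (fun i => (args i).eval (JA Φ c0 hc0 hc0Φ (fun _ => 0)) ν) from
          funext fun i => eval_JA_indep Φ c0 hc0 hc0Φ v (fun _ => 0) ν (args i)]
      · show w ⟨p, fun i => (args i).eval (JA Φ c0 hc0 hc0Φ w) ν⟩ = _
        rw [show (fun i => (args i).eval (JA Φ c0 hc0 hc0Φ w) ν)
            = (fun i => (args i).eval (JA Φ c0 hc0 hc0Φ (fun _ => 0)) ν) from
          funext fun i => eval_JA_indep Φ c0 hc0 hc0Φ w (fun _ => 0) ν (args i)]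
  | and A B ihA ihB =>
      intro hq ν hsub
      have hA := ihA hq.1 ν (fun a ha => hsub (Or.inl ha))
      have hB := ihB hq.2 ν (fun a ha => hsub (Or.inr ha))
      show Rel Φ v w Sset (min _ _) (min _ _)
      rcases le_total (A.val (JA Φ c0 hc0 hc0Φ v) ν) (B.val (JA Φ c0 hc0 hc0Φ v) ν) with h | h
      · rw [min_eq_left h, min_eq_left ((Rel_le Φ v w Sset hle h1 h0 hA hB).1 h)]
        exact hA
      · rw [min_eq_right h, min_eq_right ((Rel_le Φ v w Sset hle h1 h0 hB hA).1 h)]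
        exact hB
  | or A B ihA ihB =>
      intro hq ν hsub
      have hA := ihA hq.1 ν (fun a ha => hsub (Or.inl ha))
      have hB := ihB hq.2 ν (fun a ha => hsub (Or.inr ha))
      show Rel Φ v w Sset (max _ _) (max _ _)
      rcases le_total (A.val (JA Φ c0 hc0 hc0Φ v) ν) (B.val (JA Φ c0 hc0 hc0Φ v) ν) with h | h
      · rw [max_eq_right h, max_eq_right ((Rel_le Φ v w Sset hle h1 h0 hA hB).1 h)]
        exact hB
      · rw [max_eq_left h, max_eq_left ((Rel_le Φ v w Sset hle h1 h0 hB hA).1 h)]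
        exact hA
  | imp A B ihA ihB =>
      intro hq ν hsub
      have hA := ihA hq.1 ν (fun a ha => hsub (Or.inl ha))
      have hB := ihB hq.2 ν (fun a ha => hsub (Or.inr ha))
      show Rel Φ v w Sset (gimp _ _) (gimp _ _)
      by_cases h : A.val (JA Φ c0 hc0 hc0Φ v) ν ≤ B.val (JA Φ c0 hc0 hc0Φ v) ν
      · rw [gimp, if_pos h, gimp, if_pos ((Rel_le Φ v w Sset hle h1 h0 hA hB).1 h)]
        exact Or.inr (Or.inl ⟨rfl, rfl⟩)
      · rw [gimp, if_neg h, gimp,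
          if_neg (fun h' => h ((Rel_le Φ v w Sset hle h1 h0 hA hB).2 h'))]
        exact hB
  | delta A ihA =>
      intro hq ν hsub
      have hA := ihA hq ν hsub
      show Rel Φ v w Sset (gdelta _) (gdelta _)
      by_cases h : A.val (JA Φ c0 hc0 hc0Φ v) ν = 1
      · rw [gdelta, if_pos h, gdelta, if_pos ((Rel_one Φ v w Sset h1 hA).1 h)]
        exact Or.inr (Or.inl ⟨rfl, rfl⟩)
      · rw [gdelta, if_neg h, gdelta,
          if_neg (fun h' => h ((Rel_one Φ v w Sset h1 hA).2 h'))]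
        exact Or.inl ⟨rfl, rfl⟩
  | all x A ih => intro h; exact absurd h id
  | ex x A ih => intro h; exact absurd h id

lemma val_transfer_one
    (hle : ∀ a ∈ Sset, ∀ b ∈ Sset, (v a ≤ v b ↔ w a ≤ w b))
    (h1 : ∀ a ∈ Sset, (v a = 1 ↔ w a = 1))
    (h0 : ∀ a ∈ Sset, (v a = 0 ↔ w a = 0))
    (A : Formula S) (hq : A.isQF) (ν : ℕ → HU Φ)
    (hsub : atomsOf Φ c0 hc0 hc0Φ A ν ⊆ Sset) :
    A.val (JA Φ c0 hc0 hc0Φ v) ν = 1 ↔ A.val (JA Φ c0 hc0 hc0Φ w) ν = 1 :=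
  Rel_one Φ v w Sset h1 (val_transfer Φ c0 hc0 hc0Φ v w Sset hle h1 h0 A hq ν hsub)

end Transfer

/-- Scaling a valuation by an order-preserving map commutes with evaluation of
quantifier-free formulas. -/
lemma val_scale (v : TAtom Φ → unitInterval) (h : unitInterval → unitInterval)
    (hmono : ∀ x y, x ≤ y ↔ h x ≤ h y) (hz : h 0 = 0) (ho : h 1 = 1) :
    ∀ A : Formula S, A.isQF → ∀ ν : ℕ → HU Φ,
      A.val (JA Φ c0 hc0 hc0Φ (fun a => h (v a))) ν = h (A.val (JA Φ c0 hc0 hc0Φ v) ν) := by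
  have hone : ∀ x : unitInterval, h x = 1 → x = 1 := by
    intro x hx
    have h1x : h 1 ≤ h x := by rw [hx, ho]
    have hx1 : h x ≤ h 1 := by rw [hx, ho]
    exact le_antisymm (ui_le_one x) ((hmono 1 x).2 h1x)
  intro A
  induction A with
  | bot => intro _ ν; exact hz.symm
  | top => intro _ ν; exact ho.symm
  | atom p args =>
      intro _ ν
      show h (v ⟨p, fun i => (args i).eval (JA Φ c0 hc0 hc0Φ (fun a => h (v a))) ν⟩) = _
      rw [show (fun i => (args i).eval (JA Φ c0 hc0 hc0Φ (fun a => h (v a))) ν)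
          = (fun i => (args i).eval (JA Φ c0 hc0 hc0Φ v) ν) from
        funext fun i => eval_JA_indep Φ c0 hc0 hc0Φ _ v ν (args i)]
      rfl
  | and A B ihA ihB =>
      intro hq ν
      show min _ _ = h (min _ _)
      rw [ihA hq.1 ν, ihB hq.2 ν]
      rcases le_total (A.val (JA Φ c0 hc0 hc0Φ v) ν) (B.val (JA Φ c0 hc0 hc0Φ v) ν) with hl | hl
      · rw [min_eq_left ((hmono _ _).1 hl), min_eq_left hl]
      · rw [min_eq_right ((hmono _ _).1 hl), min_eq_right hl]
  | or A B ihA ihB =>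
      intro hq ν
      show max _ _ = h (max _ _)
      rw [ihA hq.1 ν, ihB hq.2 ν]
      rcases le_total (A.val (JA Φ c0 hc0 hc0Φ v) ν) (B.val (JA Φ c0 hc0 hc0Φ v) ν) with hl | hl
      · rw [max_eq_right ((hmono _ _).1 hl), max_eq_right hl]
      · rw [max_eq_left ((hmono _ _).1 hl), max_eq_left hl]
  | imp A B ihA ihB =>
      intro hq ν
      show gimp _ _ = h (gimp _ _)
      rw [ihA hq.1 ν, ihB hq.2 ν]
      by_cases hl : A.val (JA Φ c0 hc0 hc0Φ v) ν ≤ B.val (JA Φ c0 hc0 hc0Φ v) ν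
      · rw [gimp, if_pos ((hmono _ _).1 hl), gimp, if_pos hl, ho]
      · rw [gimp, if_neg (fun h' => hl ((hmono _ _).2 h')), gimp, if_neg hl]
  | delta A ihA =>
      intro hq ν
      show gdelta _ = h (gdelta _)
      rw [ihA hq ν]
      by_cases hl : A.val (JA Φ c0 hc0 hc0Φ v) ν = 1
      · rw [gdelta, if_pos (by rw [hl, ho]), gdelta, if_pos hl, ho]
      · rw [gdelta, if_neg (fun h' => hl (hone _ h')), gdelta, if_neg hl, hz]
  | all x A ih => intro h'; exact absurd h' id
  | ex x A ih => intro h'; exact absurd h' id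

end TermModel3

end HerbAux
namespace HerbAux

lemma E_strictMono : StrictMono (fun q : ℚ => 1/2 + ((q:ℝ) / (1 + |(q:ℝ)|)) / 2) := by
  have h : StrictMono (fun x : ℝ => x / (1 + |x|)) := by
    intro x y hxy
    have hx : (0:ℝ) < 1 + |x| := by positivity
    have hy : (0:ℝ) < 1 + |y| := by positivity
    simp only
    rw [div_lt_div_iff₀ hx hy]
    rcases abs_cases x with ⟨hx1, hx2⟩ | ⟨hx1, hx2⟩ <;>
      rcases abs_cases y with ⟨hy1, hy2⟩ | ⟨hy1, hy2⟩ <;> rw [hx1, hy1] <;> nlinarith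
  intro q r hqr
  have hc : (q:ℝ) < r := by exact_mod_cast hqr
  have := h hc
  simp only at this ⊢
  linarith

lemma E_bounds (q : ℚ) :
    0 < 1/2 + ((q:ℝ) / (1 + |(q:ℝ)|)) / 2 ∧ 1/2 + ((q:ℝ) / (1 + |(q:ℝ)|)) / 2 < 1 := by
  have h2 : |(q:ℝ) / (1 + |(q:ℝ)|)| < 1 := by
    rw [abs_div, abs_of_pos (by positivity : (0:ℝ) < 1 + |(q:ℝ)|),
      div_lt_one (by positivity)]
    linarith [abs_nonneg (q:ℝ)]
  rw [abs_lt] at h2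
  constructor <;> linarith [h2.1, h2.2]

lemma realize_order {X : Type} (P' : X → Prop) (hcnt : Countable {x : X // P' x})
    (pre : X → X → Prop) (OO ZZ : X → Prop)
    (htot : ∀ a b, P' a → P' b → pre a b ∨ pre b a)
    (htrans : ∀ a b c, P' a → P' b → P' c → pre a b → pre b c → pre a c)
    (hOtop : ∀ a b, P' a → P' b → OO b → pre a b)
    (hOup : ∀ a b, P' a → P' b → OO a → pre a b → OO b)
    (hZbot : ∀ a b, P' a → P' b → ZZ a → pre a b)
    (hZdown : ∀ a b, P' a → P' b → ZZ b → pre a b → ZZ a)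
    (hOZ : ∀ a, P' a → ¬(OO a ∧ ZZ a)) :
    ∃ v : X → unitInterval,
      (∀ a, P' a → (v a = 1 ↔ OO a)) ∧
      (∀ a, P' a → (v a = 0 ↔ ZZ a)) ∧
      (∀ a b, P' a → P' b → (v a ≤ v b ↔ pre a b)) := by
  classical
  have hrefl : ∀ a, P' a → pre a a := fun a ha => (htot a a ha ha).elim id id
  -- the "middle" elements
  let M := {x : X // P' x ∧ ¬ OO x ∧ ¬ ZZ x}
  have hMc : Countable M := by
    have hinj : Function.Injective (fun a : M => (⟨a.1, a.2.1⟩ : {x : X // P' x})) := by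
      intro a b h
      have := congrArg Subtype.val h
      exact Subtype.ext this
    exact hinj.countable
  let r : M → M → Prop := fun a b => pre a.1 b.1 ∧ pre b.1 a.1
  let Q := Quot r
  have hliftok : ∀ (a : M) (b b' : M), r b b' → pre a.1 b.1 = pre a.1 b'.1 := by
    intro a b b' hbb'
    exact propext ⟨fun h => htrans _ _ _ a.2.1 b.2.1 b'.2.1 h hbb'.1,
      fun h => htrans _ _ _ a.2.1 b'.2.1 b.2.1 h hbb'.2⟩
  let qle1 : M → Q → Prop := fun a => Quot.lift (fun b => pre a.1 b.1) (hliftok a)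
  have hliftok2 : ∀ (a a' : M), r a a' → qle1 a = qle1 a' := by
    intro a a' haa'
    funext q
    induction q using Quot.ind with
    | _ b =>
        exact propext ⟨fun h => htrans _ _ _ a'.2.1 a.2.1 b.2.1 haa'.2 h,
          fun h => htrans _ _ _ a.2.1 a'.2.1 b.2.1 haa'.1 h⟩
  let qle : Q → Q → Prop := Quot.lift qle1 hliftok2
  letI : LinearOrder Q :=
    { le := qle
      le_refl := by
        intro q
        induction q using Quot.ind with
        | _ a => exact hrefl a.1 a.2.1
      le_trans := by
        intro q1 q2 q3
        induction q1 using Quot.ind with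
        | _ a =>
          induction q2 using Quot.ind with
          | _ b =>
            induction q3 using Quot.ind with
            | _ c =>
              intro h1 h2
              exact htrans _ _ _ a.2.1 b.2.1 c.2.1 h1 h2
      le_antisymm := by
        intro q1 q2
        induction q1 using Quot.ind with
        | _ a =>
          induction q2 using Quot.ind with
          | _ b =>
            intro h1 h2
            exact Quot.sound ⟨h1, h2⟩
      le_total := by
        intro q1 q2
        induction q1 using Quot.ind with
        | _ a =>
          induction q2 using Quot.ind with
          | _ b => exact htot a.1 b.1 a.2.1 b.2.1
      toDecidableLE := Classical.decRel _ }
  have hQc : Countable Q := (Quot.mk_surjective (r := r)).countable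
  obtain ⟨e⟩ : Nonempty (Q ↪o ℚ) := Order.embedding_from_countable_to_dense Q ℚ
  let E : ℚ → ℝ := fun q => 1/2 + ((q:ℝ) / (1 + |(q:ℝ)|)) / 2
  let g : M → ℝ := fun a => E (e (Quot.mk r a))
  have hg01 : ∀ a : M, 0 < g a ∧ g a < 1 := fun a => E_bounds (e (Quot.mk r a))
  have hgle : ∀ a b : M, (g a ≤ g b ↔ pre a.1 b.1) := by
    intro a b
    constructor
    · intro h
      have h2 : e (Quot.mk r a) ≤ e (Quot.mk r b) := (E_strictMono.le_iff_le).1 h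
      have h3 : Quot.mk r a ≤ Quot.mk r b := e.le_iff_le.1 h2
      exact h3
    · intro h
      have h3 : Quot.mk r a ≤ Quot.mk r b := h
      exact E_strictMono.le_iff_le.2 (e.le_iff_le.2 h3)
  let v : X → unitInterval := fun x =>
    if hO : OO x then 1
    else if hZ : ZZ x then 0
    else if hp : P' x then ⟨g ⟨x, hp, hO, hZ⟩, le_of_lt (hg01 _).1, le_of_lt (hg01 _).2⟩
    else 0
  have hv1 : ∀ a, P' a → (v a = 1 ↔ OO a) := by
    intro a ha
    constructor
    · intro h
      by_contra hO
      rw [show v a = if hO : OO a then 1 else if hZ : ZZ a then 0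
          else if hp : P' a then ⟨g ⟨a, hp, hO, hZ⟩, le_of_lt (hg01 _).1, le_of_lt (hg01 _).2⟩
          else 0 from rfl, dif_neg hO] at h
      by_cases hZ : ZZ a
      · rw [dif_pos hZ] at h
        exact ui_zero_ne_one h
      · rw [dif_neg hZ, dif_pos ha] at h
        have := congrArg Subtype.val h
        have hlt := (hg01 ⟨a, ha, hO, hZ⟩).2
        simp only at this
        rw [this] at hlt
        norm_num at hlt
    · intro h
      show (if hO : OO a then 1 else _) = 1
      rw [dif_pos h]
  have hv0 : ∀ a, P' a → (v a = 0 ↔ ZZ a) := by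
    intro a ha
    constructor
    · intro h
      by_cases hO : OO a
      · exfalso
        have : v a = 1 := (hv1 a ha).2 hO
        rw [h] at this
        exact ui_zero_ne_one this
      · by_contra hZ
        rw [show v a = if hO' : OO a then 1 else if hZ' : ZZ a then 0
            else if hp : P' a then ⟨g ⟨a, hp, hO', hZ'⟩, le_of_lt (hg01 _).1, le_of_lt (hg01 _).2⟩
            else 0 from rfl, dif_neg hO, dif_neg hZ, dif_pos ha] at h
        have := congrArg Subtype.val h
        have hlt := (hg01 ⟨a, ha, hO, hZ⟩).1
        simp only at this
        rw [this] at hlt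
        norm_num at hlt
    · intro h
      have hO : ¬ OO a := fun hO => hOZ a ha ⟨hO, h⟩
      show (if hO' : OO a then 1 else if hZ' : ZZ a then 0 else _) = 0
      rw [dif_neg hO, dif_pos h]
  -- generic value facts
  have hvle1 : ∀ a, v a ≤ 1 := fun a => ui_le_one _
  have hv0le : ∀ a, 0 ≤ v a := fun a => ui_zero_le _
  refine ⟨v, hv1, hv0, ?_⟩
  intro a b ha hb
  by_cases hOa : OO a <;> by_cases hOb : OO b
  · constructor
    · intro _; exact hOtop a b ha hb hOb
    · intro _
      rw [(hv1 a ha).2 hOa, (hv1 b hb).2 hOb]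
  · constructor
    · intro h
      exfalso
      rw [(hv1 a ha).2 hOa] at h
      have : v b = 1 := ui_eq_one_of_one_le h
      exact hOb ((hv1 b hb).1 this)
    · intro h
      exact absurd (hOup a b ha hb hOa h) hOb
  · constructor
    · intro _; exact hOtop a b ha hb hOb
    · intro _
      rw [(hv1 b hb).2 hOb]
      exact hvle1 a
  · -- neither is top
    by_cases hZa : ZZ a
    · constructor
      · intro _; exact hZbot a b ha hb hZa
      · intro _
        rw [(hv0 a ha).2 hZa]
        exact hv0le b
    · by_cases hZb : ZZ b
      · constructor
        · intro h
          exfalso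
          rw [(hv0 b hb).2 hZb] at h
          have : v a = 0 := ui_eq_zero_of_le_zero h
          exact hZa ((hv0 a ha).1 this)
        · intro h
          exact absurd (hZdown a b ha hb hZb h) hZa
      · -- both middle
        have hva : v a = ⟨g ⟨a, ha, hOa, hZa⟩, le_of_lt (hg01 _).1, le_of_lt (hg01 _).2⟩ := by
          show (if hO' : OO a then 1 else if hZ' : ZZ a then 0 else _) = _
          rw [dif_neg hOa, dif_neg hZa, dif_pos ha]
        have hvb : v b = ⟨g ⟨b, hb, hOb, hZb⟩, le_of_lt (hg01 _).1, le_of_lt (hg01 _).2⟩ := by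
          show (if hO' : OO b then 1 else if hZ' : ZZ b then 0 else _) = _
          rw [dif_neg hOb, dif_neg hZb, dif_pos hb]
        rw [hva, hvb]
        exact Subtype.mk_le_mk.trans (hgle ⟨a, ha, hOa, hZa⟩ ⟨b, hb, hOb, hZb⟩)

end HerbAux
open HerbAux


/-- Herbrand's theorem for prenex G△: let `P` be quantifier free with free
variables among `x₀,…,x_{k-1}`, and let the Herbrand universe `U(P)` consist of the ground
terms built from the function symbols (and constants) occurring in `P`, together with a
constant `c₀` and a function symbol `f₀` of positive arity (added to prevent `U(P)` from
being empty or finite).  If `∃x̄ P(x̄)` is valid, then there are finitely many tuples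
`t̄₁,…,t̄ₙ` (`n ≥ 1`) of terms of `U(P)` such that `P(t̄₁) ∨ ⋯ ∨ P(t̄ₙ)` is valid. -/
theorem herbrand_prenex_Gdelta (S : Signature) (P : Formula S) (hQF : P.isQF)
    (k : ℕ) (hvars : ∀ v ∈ P.freeVars, v < k)
    (c₀ f₀ : S.Func) (hc₀ : S.fArity c₀ = 0) (hf₀ : 0 < S.fArity f₀)
    (hval : valid (exCloseList (List.range k) P)) :
    ∃ (n : ℕ) (ts : Fin (n + 1) → Fin k → Term S),
      (∀ i j, (ts i j).isGround ∧
        (ts i j).funcsIn ⊆ insert c₀ (insert f₀ P.funcsIn)) ∧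
      valid (bigOr
        (P.subst (fun m => if h : m < k then ts 0 ⟨m, h⟩ else .var m))
        (List.ofFn (fun i : Fin n =>
          P.subst (fun m => if h : m < k then ts i.succ ⟨m, h⟩ else .var m)))) := by
  classical
  by_contra hcon
  push_neg at hcon
  set Φ : Set S.Func := insert c₀ (insert f₀ P.funcsIn) with hΦdef
  have hc0Φ : c₀ ∈ Φ := Set.mem_insert _ _
  have hΦfin : Φ.Finite := (((funcsIn_finite P).insert f₀).insert c₀)
  have hPfuncs : P.funcsIn ⊆ Φ := fun x hx =>
    Set.mem_insert_iff.2 (Or.inr (Set.mem_insert_iff.2 (Or.inr hx)))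
  set dd : HU Φ := d0 Φ c₀ hc₀ hc0Φ with hdd
  -- canonical assignment from a tuple
  set nut : (Fin k → HU Φ) → ℕ → HU Φ :=
    fun tb n => if h : n < k then tb ⟨n, h⟩ else dd with hnut
  -- STEP A: for every finite set of tuples there is a term-model valuation
  -- making all corresponding instances non-designated.
  have stepA : ∀ F : Finset (Fin k → HU Φ), ∃ vv : TAtom Φ → unitInterval,
      ∀ tb ∈ F, P.val (JA Φ c₀ hc₀ hc0Φ vv) (nut tb) ≠ 1 := by
    intro F
    set G : Finset (Fin k → HU Φ) := insert (fun _ => dd) F with hG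
    have hGpos : 0 < G.card := Finset.card_pos.2 ⟨_, Finset.mem_insert_self _ _⟩
    set n := G.card - 1 with hn
    have hGcard : G.toList.length = n + 1 := by
      rw [Finset.length_toList]; omega
    set ts : Fin (n + 1) → Fin k → Term S :=
      fun i j => ((G.toList.get (Fin.cast hGcard.symm i)) j).val with hts
    have htsc : ∀ i j, (ts i j).isGround ∧ (ts i j).funcsIn ⊆ Φ :=
      fun i j => ((G.toList.get (Fin.cast hGcard.symm i)) j).2
    have hnv := hcon n ts htsc
    unfold valid at hnv
    push_neg at hnv
    obtain ⟨I, μ, hIval⟩ := hnv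
    have hlt : ∀ i : Fin (n + 1),
        (P.subst (fun m => if h : m < k then ts i ⟨m, h⟩ else .var m)).val I μ ≠ 1 := by
      intro i hi1
      apply hIval
      apply ui_eq_one_of_one_le
      rw [← hi1]
      induction i using Fin.cases with
      | zero => exact (le_bigOr I μ _ _).1
      | succ j =>
          exact (le_bigOr I μ _ _).2 _ (List.mem_ofFn.2 ⟨j, rfl⟩)
    refine ⟨pull Φ I μ, ?_⟩
    intro tb htb
    have htbG : tb ∈ G := Finset.mem_insert_of_mem htb
    obtain ⟨i, hi⟩ := List.mem_iff_get.1 (Finset.mem_toList.2 htbG)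
    set i' : Fin (n + 1) := Fin.cast hGcard i with hi'
    have htseq : ∀ j, ts i' j = (tb j).val := by
      intro j
      have : Fin.cast hGcard.symm i' = i := by
        apply Fin.ext; simp [hi']
      rw [hts]
      simp only [this, hi]
    have hQeq : (P.subst (fun m => if h : m < k then ts i' ⟨m, h⟩ else .var m)).val I μ
        = P.val (JA Φ c₀ hc₀ hc0Φ (pull Φ I μ)) (nut tb) := by
      rw [val_subst I μ _ P hQF,
        val_pull Φ c₀ hc₀ hc0Φ I μ P hQF hPfuncs (nut tb)]
      apply val_congr I _ _ P hQF
      intro m hm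
      have hmk : m < k := hvars m hm
      rw [hnut]
      simp only [dif_pos hmk, htseq]
    intro hone
    exact hlt i' (by rw [hQeq]; exact hone)
  -- STEP B: an ultrafilter limit of the valuations from Step A.
  haveI : Nonempty (Fin k → HU Φ) := ⟨fun _ => dd⟩
  set U : Ultrafilter (Finset (Fin k → HU Φ)) := Ultrafilter.of Filter.atTop with hU
  have hUle : (U : Filter (Finset (Fin k → HU Φ))) ≤ Filter.atTop := Ultrafilter.of_le _
  choose vF hvF using stepA
  set pre : TAtom Φ → TAtom Φ → Prop := fun a b => {F | vF F a ≤ vF F b} ∈ U with hpre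
  set OO : TAtom Φ → Prop := fun a => {F | vF F a = 1} ∈ U with hOO
  set ZZ : TAtom Φ → Prop := fun a => {F | vF F a = 0} ∈ U with hZZ
  haveI hDcnt : Countable (HU Φ) := HU_countable Φ hΦfin
  haveI : Countable ↥P.predsIn := (predsIn_finite P).countable.to_subtype
  have hcnt : Countable {a : TAtom Φ // a.1 ∈ P.predsIn} := by
    have hsurj : Function.Surjective
        (fun x : Σ p : ↥P.predsIn, (Fin (S.pArity p.1) → HU Φ) =>
          (⟨⟨x.1.1, x.2⟩, x.1.2⟩ : {a : TAtom Φ // a.1 ∈ P.predsIn})) := by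
      rintro ⟨⟨p, args⟩, hp⟩
      exact ⟨⟨⟨p, hp⟩, args⟩, rfl⟩
    exact hsurj.countable
  obtain ⟨v, hv1, hv0, hvle⟩ :=
    realize_order (fun a : TAtom Φ => a.1 ∈ P.predsIn) hcnt pre OO ZZ
      (by -- total
        intro a b _ _
        rcases U.mem_or_compl_mem {F | vF F a ≤ vF F b} with h | h
        · exact Or.inl h
        · exact Or.inr (Filter.mem_of_superset h (fun F hF => show vF F b ≤ vF F a from le_of_not_ge (fun hle => hF (show F ∈ {F | vF F a ≤ vF F b} from hle)))))
      (by -- trans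
        intro a b c _ _ _ h1 h2
        exact Filter.mem_of_superset (Filter.inter_mem h1 h2)
          (fun F hF => show vF F a ≤ vF F c from
            le_trans (show vF F a ≤ vF F b from hF.1) (show vF F b ≤ vF F c from hF.2)))
      (by -- top
        intro a b _ _ hb
        exact Filter.mem_of_superset hb (fun F hF => by
          show vF F a ≤ vF F b
          rw [show vF F b = 1 from hF]
          exact ui_le_one _))
      (by -- up
        intro a b _ _ ha hab
        refine Filter.mem_of_superset (Filter.inter_mem ha hab) (fun F hF => ?_)
        have h1 : vF F a = 1 := hF.1
        have h2 : vF F a ≤ vF F b := hF.2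
        exact ui_eq_one_of_one_le (h1 ▸ h2)
      )
      (by -- bot
        intro a b _ _ ha
        exact Filter.mem_of_superset ha (fun F hF => by
          show vF F a ≤ vF F b
          rw [show vF F a = 0 from hF]
          exact ui_zero_le _))
      (by -- down
        intro a b _ _ hb hab
        refine Filter.mem_of_superset (Filter.inter_mem hb hab) (fun F hF => ?_)
        have h1 : vF F b = 0 := hF.1
        have h2 : vF F a ≤ vF F b := hF.2
        exact ui_eq_zero_of_le_zero (h1 ▸ h2)
      )
      (by -- not both
        intro a _ hZO
        obtain ⟨F, hF⟩ := U.nonempty_of_mem (Filter.inter_mem hZO.1 hZO.2)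
        exact ui_zero_ne_one ((hF.2).symm.trans hF.1)
      )
  -- STEP C: all ground instances are non-designated under `v`.
  have stepC : ∀ tb : Fin k → HU Φ, P.val (JA Φ c₀ hc₀ hc0Φ v) (nut tb) ≠ 1 := by
    intro tb
    set Sset : Set (TAtom Φ) := atomsOf Φ c₀ hc₀ hc0Φ P (nut tb) with hSset
    have hSfin : Sset.Finite := atomsOf_finite Φ c₀ hc₀ hc0Φ P (nut tb)
    have hSP : ∀ a ∈ Sset, a.1 ∈ P.predsIn := atomsOf_preds Φ c₀ hc₀ hc0Φ P (nut tb)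
    have hE1 : ∀ a ∈ Sset, ∀ b ∈ Sset,
        {F | (v a ≤ v b ↔ vF F a ≤ vF F b)} ∈ U := by
      intro a ha b hb
      by_cases hv : v a ≤ v b
      · have hp : pre a b := (hvle a b (hSP a ha) (hSP b hb)).1 hv
        exact Filter.mem_of_superset hp (fun F hF => ⟨fun _ => hF, fun _ => hv⟩)
      · have hp : ¬ pre a b := fun hp => hv ((hvle a b (hSP a ha) (hSP b hb)).2 hp)
        have hcm : {F | vF F a ≤ vF F b}ᶜ ∈ U := (Ultrafilter.compl_mem_iff_notMem).2 hp
        exact Filter.mem_of_superset hcm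
          (fun F hF => ⟨fun h => absurd h hv, fun h => absurd h hF⟩)
    have hE2 : ∀ a ∈ Sset, {F | (v a = 1 ↔ vF F a = 1)} ∈ U := by
      intro a ha
      by_cases hv : v a = 1
      · have hp : OO a := (hv1 a (hSP a ha)).1 hv
        exact Filter.mem_of_superset hp (fun F hF => ⟨fun _ => hF, fun _ => hv⟩)
      · have hp : ¬ OO a := fun hp => hv ((hv1 a (hSP a ha)).2 hp)
        have hcm : {F | vF F a = 1}ᶜ ∈ U := (Ultrafilter.compl_mem_iff_notMem).2 hp
        exact Filter.mem_of_superset hcm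
          (fun F hF => ⟨fun h => absurd h hv, fun h => absurd h hF⟩)
    have hE3 : ∀ a ∈ Sset, {F | (v a = 0 ↔ vF F a = 0)} ∈ U := by
      intro a ha
      by_cases hv : v a = 0
      · have hp : ZZ a := (hv0 a (hSP a ha)).1 hv
        exact Filter.mem_of_superset hp (fun F hF => ⟨fun _ => hF, fun _ => hv⟩)
      · have hp : ¬ ZZ a := fun hp => hv ((hv0 a (hSP a ha)).2 hp)
        have hcm : {F | vF F a = 0}ᶜ ∈ U := (Ultrafilter.compl_mem_iff_notMem).2 hp
        exact Filter.mem_of_superset hcm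
          (fun F hF => ⟨fun h => absurd h hv, fun h => absurd h hF⟩)
    have hT : {F : Finset (Fin k → HU Φ) | tb ∈ F} ∈ U := by
      apply hUle
      refine Filter.mem_atTop_sets.2 ⟨{tb}, fun b hb => ?_⟩
      exact Finset.singleton_subset_iff.1 hb
    have hA : (⋂ a ∈ Sset, ⋂ b ∈ Sset, {F | (v a ≤ v b ↔ vF F a ≤ vF F b)}) ∈ U :=
      (Filter.biInter_mem hSfin).2
        (fun a ha => (Filter.biInter_mem hSfin).2 (fun b hb => hE1 a ha b hb))
    have hB : (⋂ a ∈ Sset, {F | (v a = 1 ↔ vF F a = 1)}) ∈ U :=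
      (Filter.biInter_mem hSfin).2 (fun a ha => hE2 a ha)
    have hC : (⋂ a ∈ Sset, {F | (v a = 0 ↔ vF F a = 0)}) ∈ U :=
      (Filter.biInter_mem hSfin).2 (fun a ha => hE3 a ha)
    obtain ⟨F, hF⟩ := U.nonempty_of_mem
      (Filter.inter_mem hT (Filter.inter_mem hA (Filter.inter_mem hB hC)))
    have hFt : tb ∈ F := hF.1
    have hle' : ∀ a ∈ Sset, ∀ b ∈ Sset, (v a ≤ v b ↔ vF F a ≤ vF F b) := by
      intro a ha b hb
      have := hF.2.1
      rw [Set.mem_iInter₂] at this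
      have := this a ha
      rw [Set.mem_iInter₂] at this
      exact this b hb
    have h1' : ∀ a ∈ Sset, (v a = 1 ↔ vF F a = 1) := by
      intro a ha
      have := hF.2.2.1
      rw [Set.mem_iInter₂] at this
      exact this a ha
    have h0' : ∀ a ∈ Sset, (v a = 0 ↔ vF F a = 0) := by
      intro a ha
      have := hF.2.2.2
      rw [Set.mem_iInter₂] at this
      exact this a ha
    intro hone
    exact hvF F tb hFt
      ((val_transfer_one Φ c₀ hc₀ hc0Φ v (vF F) Sset hle' h1' h0' P hQF (nut tb)
        subset_rfl).1 hone)
  -- STEP D: rescale and contradict validity.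
  set w : TAtom Φ → unitInterval := fun a => half (v a) with hw
  have hbound : ∀ μ' : ℕ → HU Φ, P.val (JA Φ c₀ hc₀ hc0Φ w) μ' ≤ halfone := by
    intro μ'
    have hcg : P.val (JA Φ c₀ hc₀ hc0Φ w) μ'
        = P.val (JA Φ c₀ hc₀ hc0Φ w) (nut (fun j => μ' j.1)) := by
      apply val_congr _ _ _ P hQF
      intro m hm
      have hmk : m < k := hvars m hm
      rw [hnut]
      simp only [dif_pos hmk]
      rfl
    rw [hcg,
      val_scale Φ c₀ hc₀ hc0Φ v half half_le_half_iff half_zero half_one P hQF _]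
    exact half_lt_one (stepC (fun j => μ' j.1))
  have hex := exCloseList_le (JA Φ c₀ hc₀ hc0Φ w) P halfone hbound
    (List.range k) (fun _ => dd)
  rw [hval (JA Φ c₀ hc₀ hc0Φ w) (fun _ => dd)] at hex
  exact not_one_le_halfone hex
end

section
/- Soundness of Skolemization for validity in prenex G△: let F = A₁ ∧ ⋯ ∧ Aₘ where each Aᵢ is a closed prenex formula of first-order Gödel logic with △, and let ∃x̄ Aᵢ^S(x̄) be the Skolem form of Aᵢ. Then F is valid if and only if the conjunction over i = 1,…,m of ∃x̄ Aᵢ^S(x̄) is valid. -/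
/-- The (validity) Skolem substitution for a prenex prefix `pref`: each universally
quantified variable `i` is replaced by the Skolem term `sk i (ȳ)`, where `ȳ` are the
existentially quantified variables `< i`; existential variables are kept. -/
def skSubstVal {S : Signature} (pref : List Bool) (sk : ℕ → S.Func) : ℕ → Term S :=
  fun i =>
    if pref.getD i false = true then
      Term.func (sk i) (fun j => Term.var ((exPos (pref.take i)).getD (j : ℕ) 0))
    else Term.var i

/-- The Skolem form `∃x̄ P^S(x̄)` of the prenex formula with prefix `pref` and
quantifier-free matrix `P`. -/
def skolemFormVal {S : Signature} (pref : List Bool) (sk : ℕ → S.Func)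
    (P : Formula S) : Formula S :=
  exCloseList (exPos pref) (P.subst (skSubstVal pref sk))

namespace SkolemAux

open Formula

variable {S : Signature}

lemma unit_le_one (a : unitInterval) : a ≤ 1 := a.2.2

lemma unit_min_eq_one {a b : unitInterval} : min a b = 1 ↔ a = 1 ∧ b = 1 := by
  constructor
  · intro h
    constructor
    · exact le_antisymm (unit_le_one a) (h ▸ min_le_left a b)
    · exact le_antisymm (unit_le_one b) (h ▸ min_le_right a b)
  · rintro ⟨ha, hb⟩; simp [ha, hb]

/-- Term evaluation only depends on the assignment on the variables of the term. -/
lemma Term.eval_congr {I : Interp S} {μ μ' : ℕ → I.D} :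
    ∀ (t : Term S), (∀ n ∈ t.vars, μ n = μ' n) → t.eval I μ = t.eval I μ'
  | .var n, h => h n (by simp [Term.vars])
  | .func f args, h => by
      simp only [Term.eval]
      congr 1
      funext i
      exact Term.eval_congr (args i) (fun n hn => h n (by
        simp only [Term.vars, Set.mem_iUnion]; exact ⟨i, hn⟩))

/-- Formula valuation only depends on the assignment on the free variables. -/
lemma val_congr {I : Interp S} :
    ∀ (A : Formula S) {μ μ' : ℕ → I.D}, (∀ n ∈ A.freeVars, μ n = μ' n) →
      A.val I μ = A.val I μ'
  | .bot, _, _, _ => rfl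
  | .top, _, _, _ => rfl
  | .atom p args, μ, μ', h => by
      simp only [Formula.val]
      congr 1
      funext i
      exact Term.eval_congr (args i) (fun n hn => h n (by
        simp only [Formula.freeVars, Set.mem_iUnion]; exact ⟨i, hn⟩))
  | .and A B, μ, μ', h => by
      simp only [Formula.val]
      rw [val_congr A (fun n hn => h n (Or.inl hn)),
        val_congr B (fun n hn => h n (Or.inr hn))]
  | .or A B, μ, μ', h => by
      simp only [Formula.val]
      rw [val_congr A (fun n hn => h n (Or.inl hn)),
        val_congr B (fun n hn => h n (Or.inr hn))]
  | .imp A B, μ, μ', h => by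
      simp only [Formula.val]
      rw [val_congr A (fun n hn => h n (Or.inl hn)),
        val_congr B (fun n hn => h n (Or.inr hn))]
  | .delta A, μ, μ', h => by
      simp only [Formula.val]
      rw [val_congr A h]
  | .all x A, μ, μ', h => by
      simp only [Formula.val]
      refine iInf_congr fun d => val_congr A fun n hn => ?_
      by_cases hx : n = x
      · subst hx; simp [Function.update]
      · simp only [Function.update, dif_neg hx]
        exact h n ⟨hn, hx⟩
  | .ex x A, μ, μ', h => by
      simp only [Formula.val]
      refine iSup_congr fun d => val_congr A fun n hn => ?_
      by_cases hx : n = x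
      · subst hx; simp [Function.update]
      · simp only [Function.update, dif_neg hx]
        exact h n ⟨hn, hx⟩

end SkolemAux
namespace SkolemAux

variable {S : Signature}

/-- Term evaluation only depends on the interpretation of the function symbols in it. -/
lemma Term.eval_fI_congr {I : Interp S} (g : ∀ f : S.Func, (Fin (S.fArity f) → I.D) → I.D)
    (pI' : ∀ p : S.Pred, (Fin (S.pArity p) → I.D) → unitInterval) {μ : ℕ → I.D} :
    ∀ (t : Term S), (∀ f ∈ t.funcsIn, g f = I.fI f) →
      t.eval ⟨I.D, I.dNe, g, pI'⟩ μ = t.eval I μ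
  | .var n, _ => rfl
  | .func f args, h => by
      simp only [Term.eval]
      rw [h f (by simp [Term.funcsIn])]
      congr 1
      funext i
      exact Term.eval_fI_congr g pI' (args i) (fun f' hf' => h f' (by
        simp only [Term.funcsIn, Set.mem_insert_iff, Set.mem_iUnion]
        exact Or.inr ⟨i, hf'⟩))

/-- Formula valuation only depends on the interpretation of the function symbols in it
(with the predicate interpretation unchanged). -/
lemma val_fI_congr {I : Interp S} (g : ∀ f : S.Func, (Fin (S.fArity f) → I.D) → I.D) :
    ∀ (A : Formula S) {μ : ℕ → I.D}, (∀ f ∈ A.funcsIn, g f = I.fI f) →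
      A.val ⟨I.D, I.dNe, g, I.pI⟩ μ = A.val I μ
  | .bot, _, _ => rfl
  | .top, _, _ => rfl
  | .atom p args, μ, h => by
      simp only [Formula.val]
      congr 1
      funext i
      exact Term.eval_fI_congr g I.pI (args i) (fun f hf => h f (by
        simp only [Formula.funcsIn, Set.mem_iUnion]; exact ⟨i, hf⟩))
  | .and A B, μ, h => by
      simp only [Formula.val]
      rw [val_fI_congr g A (fun f hf => h f (Or.inl hf)),
        val_fI_congr g B (fun f hf => h f (Or.inr hf))]
  | .or A B, μ, h => by
      simp only [Formula.val]
      rw [val_fI_congr g A (fun f hf => h f (Or.inl hf)),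
        val_fI_congr g B (fun f hf => h f (Or.inr hf))]
  | .imp A B, μ, h => by
      simp only [Formula.val]
      rw [val_fI_congr g A (fun f hf => h f (Or.inl hf)),
        val_fI_congr g B (fun f hf => h f (Or.inr hf))]
  | .delta A, μ, h => by
      simp only [Formula.val]
      rw [val_fI_congr g A h]
  | .all x A, μ, h => by
      simp only [Formula.val]
      exact iInf_congr fun d => val_fI_congr g A h
  | .ex x A, μ, h => by
      simp only [Formula.val]
      exact iSup_congr fun d => val_fI_congr g A h

/-- Substitution lemma for terms. -/
lemma Term.eval_subst {I : Interp S} {μ : ℕ → I.D} {σ : ℕ → Term S} :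
    ∀ (t : Term S), (t.subst σ).eval I μ = t.eval I (fun n => (σ n).eval I μ)
  | .var n => rfl
  | .func f args => by
      simp only [Term.subst, Term.eval]
      congr 1
      funext i
      exact Term.eval_subst (args i)

/-- Substitution lemma for quantifier-free formulas. -/
lemma val_subst_of_isQF {I : Interp S} {σ : ℕ → Term S} :
    ∀ (A : Formula S), A.isQF → ∀ (μ : ℕ → I.D),
      (A.subst σ).val I μ = A.val I (fun n => (σ n).eval I μ)
  | .bot, _, _ => rfl
  | .top, _, _ => rfl
  | .atom p args, _, μ => by
      simp only [Formula.subst, Formula.val]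
      congr 1
      funext i
      exact Term.eval_subst (args i)
  | .and A B, h, μ => by
      simp only [Formula.subst, Formula.val]
      rw [val_subst_of_isQF A h.1 μ, val_subst_of_isQF B h.2 μ]
  | .or A B, h, μ => by
      simp only [Formula.subst, Formula.val]
      rw [val_subst_of_isQF A h.1 μ, val_subst_of_isQF B h.2 μ]
  | .imp A B, h, μ => by
      simp only [Formula.subst, Formula.val]
      rw [val_subst_of_isQF A h.1 μ, val_subst_of_isQF B h.2 μ]
  | .delta A, h, μ => by
      simp only [Formula.subst, Formula.val]
      rw [val_subst_of_isQF A h μ]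

/-- Variables of a substituted term. -/
lemma Term.vars_subst {σ : ℕ → Term S} :
    ∀ (t : Term S), (t.subst σ).vars ⊆ ⋃ n ∈ t.vars, (σ n).vars
  | .var n => by simp [Term.subst, Term.vars]
  | .func f args => by
      simp only [Term.subst, Term.vars, Set.iUnion_subset_iff]
      intro i
      refine (Term.vars_subst (args i)).trans ?_
      refine Set.iUnion₂_subset fun n hn => ?_
      exact Set.subset_iUnion₂ (s := fun n _ => (σ n).vars) n
        (by simp only [Term.vars, Set.mem_iUnion]; exact ⟨i, hn⟩)

/-- Free variables of a substituted quantifier-free formula. -/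
lemma freeVars_subst_of_isQF {σ : ℕ → Term S} :
    ∀ (A : Formula S), A.isQF →
      (A.subst σ).freeVars ⊆ ⋃ n ∈ A.freeVars, (σ n).vars
  | .bot, _ => by simp [Formula.subst, Formula.freeVars]
  | .top, _ => by simp [Formula.subst, Formula.freeVars]
  | .atom p args, _ => by
      simp only [Formula.subst, Formula.freeVars, Set.iUnion_subset_iff]
      intro i
      refine (Term.vars_subst (args i)).trans ?_
      refine Set.iUnion₂_subset fun n hn => ?_
      exact Set.subset_iUnion₂ (s := fun n _ => (σ n).vars) n
        (by simp only [Set.mem_iUnion]; exact ⟨i, hn⟩)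
  | .and A B, h => by
      simp only [Formula.subst, Formula.freeVars, Set.union_subset_iff]
      constructor
      · refine (freeVars_subst_of_isQF A h.1).trans ?_
        refine Set.iUnion₂_subset fun n hn => ?_
        exact Set.subset_iUnion₂ (s := fun n _ => (σ n).vars) n (Or.inl hn)
      · refine (freeVars_subst_of_isQF B h.2).trans ?_
        refine Set.iUnion₂_subset fun n hn => ?_
        exact Set.subset_iUnion₂ (s := fun n _ => (σ n).vars) n (Or.inr hn)
  | .or A B, h => by
      simp only [Formula.subst, Formula.freeVars, Set.union_subset_iff]
      constructor
      · refine (freeVars_subst_of_isQF A h.1).trans ?_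
        refine Set.iUnion₂_subset fun n hn => ?_
        exact Set.subset_iUnion₂ (s := fun n _ => (σ n).vars) n (Or.inl hn)
      · refine (freeVars_subst_of_isQF B h.2).trans ?_
        refine Set.iUnion₂_subset fun n hn => ?_
        exact Set.subset_iUnion₂ (s := fun n _ => (σ n).vars) n (Or.inr hn)
  | .imp A B, h => by
      simp only [Formula.subst, Formula.freeVars, Set.union_subset_iff]
      constructor
      · refine (freeVars_subst_of_isQF A h.1).trans ?_
        refine Set.iUnion₂_subset fun n hn => ?_
        exact Set.subset_iUnion₂ (s := fun n _ => (σ n).vars) n (Or.inl hn)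
      · refine (freeVars_subst_of_isQF B h.2).trans ?_
        refine Set.iUnion₂_subset fun n hn => ?_
        exact Set.subset_iUnion₂ (s := fun n _ => (σ n).vars) n (Or.inr hn)
  | .delta A, h => by
      simp only [Formula.subst, Formula.freeVars]
      exact freeVars_subst_of_isQF A h

end SkolemAux
namespace SkolemAux

variable {S : Signature}

lemma freeVars_exCloseList :
    ∀ (xs : List ℕ) (B : Formula S),
      (exCloseList xs B).freeVars ⊆ B.freeVars \ {n | n ∈ xs}
  | [], B => by simp [exCloseList]
  | x :: xs, B => by
      simp only [exCloseList, Formula.freeVars]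
      intro n hn
      obtain ⟨hn1, hn2⟩ := hn
      have := freeVars_exCloseList xs B hn1
      exact ⟨this.1, by
        intro hmem
        rcases List.mem_cons.1 hmem with h | h
        · exact hn2 h
        · exact this.2 h⟩

/-- A formula with no free variables has the same value under all assignments. -/
lemma val_of_closed {I : Interp S} {A : Formula S} (h : A.freeVars ⊆ ∅)
    (μ μ' : ℕ → I.D) : A.val I μ = A.val I μ' :=
  val_congr A fun n hn => absurd (h hn) (Set.notMem_empty n)

lemma le_val_exCloseList {I : Interp S} :
    ∀ (xs : List ℕ) (B : Formula S) (μ ν : ℕ → I.D),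
      (∀ n, n ∉ xs → ν n = μ n) → B.val I ν ≤ (exCloseList xs B).val I μ
  | [], B, μ, ν, h => by
      have : ν = μ := funext fun n => h n List.not_mem_nil
      rw [exCloseList, this]
  | x :: xs, B, μ, ν, h => by
      simp only [exCloseList, Formula.val]
      refine le_trans (le_val_exCloseList xs B (Function.update μ x (ν x)) ν ?_)
        (le_iSup (fun d => (exCloseList xs B).val I (Function.update μ x d)) (ν x))
      intro n hn
      by_cases hx : n = x
      · subst hx; simp [Function.update]
      · simp only [Function.update, dif_neg hx]
        exact h n (by simp [hx, hn])

lemma val_exCloseList_le {I : Interp S} {c : unitInterval} :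
    ∀ (xs : List ℕ) (B : Formula S) (μ : ℕ → I.D),
      (∀ ν : ℕ → I.D, (∀ n, n ∉ xs → ν n = μ n) → B.val I ν ≤ c) →
      (exCloseList xs B).val I μ ≤ c
  | [], B, μ, h => h μ (fun _ _ => rfl)
  | x :: xs, B, μ, h => by
      simp only [exCloseList, Formula.val]
      refine iSup_le fun d => ?_
      refine val_exCloseList_le xs B (Function.update μ x d) fun ν hν => ?_
      refine h ν fun n hn => ?_
      have hx : n ≠ x := fun e => hn (e ▸ List.mem_cons_self (a := x) (l := xs))
      rw [hν n (fun hmem => hn (List.mem_cons_of_mem x hmem))]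
      simp [Function.update, hx]

lemma mem_exPos {L : List Bool} {i : ℕ} :
    i ∈ exPos L ↔ i < L.length ∧ L.getD i true = false := by
  simp [exPos, List.mem_filter, List.mem_range]

lemma mem_univPos {L : List Bool} {i : ℕ} :
    i ∈ univPos L ↔ i < L.length ∧ L.getD i false = true := by
  simp [univPos, List.mem_filter, List.mem_range]

lemma mem_exPos' {L : List Bool} {i : ℕ} :
    i ∈ exPos L ↔ i < L.length ∧ L.getD i false = false := by
  rw [mem_exPos]
  constructor
  · rintro ⟨h1, h2⟩
    exact ⟨h1, by rw [List.getD_eq_getElem L false h1] at *; rw [← h2, List.getD_eq_getElem L true h1]⟩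
  · rintro ⟨h1, h2⟩
    exact ⟨h1, by rw [List.getD_eq_getElem L true h1] at *; rw [← h2, List.getD_eq_getElem L false h1]⟩

lemma mem_univPos' {L : List Bool} {i : ℕ} (hi : i < L.length) :
    i ∈ univPos L ↔ L.getD i false = true := by
  rw [mem_univPos]; exact ⟨fun h => h.2, fun h => ⟨hi, h⟩⟩

lemma exPos_nodup (L : List Bool) : (exPos L).Nodup :=
  List.nodup_range.filter _

lemma mem_exPos_take {L : List Bool} {k i : ℕ} :
    i ∈ exPos (L.take k) ↔ i < k ∧ i ∈ exPos L := by
  rw [mem_exPos', mem_exPos']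
  simp only [List.length_take, lt_min_iff]
  constructor
  · rintro ⟨⟨h1, h2⟩, h3⟩
    refine ⟨h1, h2, ?_⟩
    rw [List.getD_eq_getElem _ false (by simp [List.length_take]; omega)] at h3
    rw [List.getElem_take] at h3
    rw [List.getD_eq_getElem L false h2]
    exact h3
  · rintro ⟨h1, h2, h3⟩
    refine ⟨⟨h1, h2⟩, ?_⟩
    rw [List.getD_eq_getElem _ false (by simp [List.length_take]; omega)]
    rw [List.getElem_take]
    rw [List.getD_eq_getElem L false h2] at h3
    exact h3

lemma exPos_lt_of_mem_take {L : List Bool} {k i : ℕ} (h : i ∈ exPos (L.take k)) :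
    i < k := (mem_exPos_take.1 h).1

end SkolemAux
namespace SkolemAux

variable {S : Signature}

lemma skSubstVal_ex {L : List Bool} {sk : ℕ → S.Func} {n : ℕ}
    (h : L.getD n false = false) : skSubstVal L sk n = .var n := by
  unfold skSubstVal
  rw [h]
  simp

lemma vars_skSubstVal_univ {L : List Bool} {sk : ℕ → S.Func} {n : ℕ}
    (h : L.getD n false = true)
    (hA : S.fArity (sk n) = (exPos (L.take n)).length) :
    (skSubstVal L sk n).vars ⊆ {i | i ∈ exPos (L.take n)} := by
  simp only [skSubstVal, if_pos h]
  intro v hv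
  simp only [Term.vars, Set.mem_iUnion, Set.mem_singleton_iff] at hv
  obtain ⟨j, hj⟩ := hv
  have hjl : (j : ℕ) < (exPos (L.take n)).length := hA ▸ j.2
  rw [List.getD_eq_getElem _ 0 hjl] at hj
  subst hj
  exact List.getElem_mem hjl

section Easy

variable {I : Interp S} {L : List Bool} {P : Formula S} {sk : ℕ → S.Func}

/-- Free variables of the Skolemized matrix are existential positions. -/
lemma freeVars_skolem_matrix (hQF : P.isQF)
    (hclosed : ∀ v ∈ P.freeVars, v < L.length)
    (harity : ∀ j ∈ univPos L, S.fArity (sk j) = (exPos (List.take j L)).length) :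
    (P.subst (skSubstVal L sk)).freeVars ⊆ {i | i ∈ exPos L} := by
  refine (freeVars_subst_of_isQF P hQF).trans ?_
  refine Set.iUnion₂_subset fun n hn => ?_
  have hnlen : n < L.length := hclosed n hn
  by_cases hu : L.getD n false = true
  · refine (vars_skSubstVal_univ hu (harity n (mem_univPos.2 ⟨hnlen, hu⟩))).trans ?_
    intro v hv
    exact (mem_exPos_take.1 hv).2
  · rw [skSubstVal_ex (by simpa using hu)]
    intro v hv
    simp only [Term.vars, Set.mem_singleton_iff] at hv
    subst hv
    exact mem_exPos'.2 ⟨hnlen, by simpa using hu⟩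

lemma easy_aux (hQF : P.isQF)
    (hclosed : ∀ v ∈ P.freeVars, v < L.length)
    (harity : ∀ j ∈ univPos L, S.fArity (sk j) = (exPos (List.take j L)).length) :
    ∀ (n k : ℕ), k + n = L.length → ∀ μ : ℕ → I.D,
      (∀ i, i < k → L.getD i false = true →
        μ i = Term.eval I μ (skSubstVal L sk i)) →
      (buildPrenex (L.drop k) k P).val I μ ≤ (skolemFormVal L sk P).val I μ := by
  have hFV := freeVars_skolem_matrix (sk := sk) hQF hclosed harity
  have hEclosed : (skolemFormVal L sk P).freeVars ⊆ ∅ := by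
    refine (freeVars_exCloseList _ _).trans ?_
    intro v hv
    exact absurd (hFV hv.1) hv.2
  intro n
  induction n with
  | zero =>
      intro k hk μ hcons
      have hk' : k = L.length := by omega
      subst hk'
      rw [List.drop_length]
      show P.val I μ ≤ _
      have h1 : (P.subst (skSubstVal L sk)).val I μ = P.val I μ := by
        rw [val_subst_of_isQF P hQF μ]
        refine val_congr P fun v hv => ?_
        have hvlen : v < L.length := hclosed v hv
        by_cases hu : L.getD v false = true
        · exact (hcons v hvlen hu).symm
        · rw [skSubstVal_ex (by simpa using hu)]; rfl
      rw [← h1]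
      exact le_val_exCloseList _ _ μ μ (fun _ _ => rfl)
  | succ n ih =>
      intro k hk μ hcons
      have hklen : k < L.length := by omega
      rw [List.drop_eq_getElem_cons hklen]
      have hgetD : ∀ d : Bool, L.getD k d = L[k] := fun d => List.getD_eq_getElem L d hklen
      by_cases hb : L[k] = true
      · -- universal quantifier
        simp only [buildPrenex, hb, if_true]
        set d₀ := Term.eval I μ (skSubstVal L sk k) with hd₀
        have hvars : ∀ v ∈ (skSubstVal L sk k).vars, v ≠ k := by
          intro v hv
          have := vars_skSubstVal_univ (sk := sk) ((hgetD false).trans hb)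
            (harity k (mem_univPos.2 ⟨hklen, (hgetD false).trans hb⟩)) hv
          have := exPos_lt_of_mem_take this
          omega
        have step : (buildPrenex (L.drop (k+1)) (k+1) P).val I (Function.update μ k d₀)
            ≤ (skolemFormVal L sk P).val I (Function.update μ k d₀) := by
          refine ih (k+1) (by omega) _ fun i hi hui => ?_
          by_cases hik : i = k
          · subst hik
            simp only [Function.update_self]
            rw [hd₀]
            exact Term.eval_congr _ fun v hv => by
              simp [Function.update, hvars v hv]
          · have hik' : i < k := by omega
            rw [Function.update_of_ne hik]
            rw [hcons i hik' hui]
            refine Term.eval_congr _ fun v hv => ?_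
            have hvtake := vars_skSubstVal_univ (sk := sk) hui
              (harity i (mem_univPos.2 ⟨by omega, hui⟩)) hv
            have := exPos_lt_of_mem_take hvtake
            simp [Function.update, show v ≠ k by omega]
        calc (Formula.all k (buildPrenex (L.drop (k+1)) (k+1) P)).val I μ
            ≤ (buildPrenex (L.drop (k+1)) (k+1) P).val I (Function.update μ k d₀) :=
              iInf_le _ d₀
          _ ≤ (skolemFormVal L sk P).val I (Function.update μ k d₀) := step
          _ = (skolemFormVal L sk P).val I μ := val_of_closed hEclosed _ _
      · -- existential quantifier
        simp only [buildPrenex, hb, if_false]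
        show (Formula.ex k _).val I μ ≤ _
        simp only [Formula.val]
        refine iSup_le fun d => ?_
        have step : (buildPrenex (L.drop (k+1)) (k+1) P).val I (Function.update μ k d)
            ≤ (skolemFormVal L sk P).val I (Function.update μ k d) := by
          refine ih (k+1) (by omega) _ fun i hi hui => ?_
          have hik : i ≠ k := by
            intro e; subst e
            rw [hgetD false] at hui
            exact hb hui
          have hik' : i < k := by omega
          rw [Function.update_of_ne hik]
          rw [hcons i hik' hui]
          refine Term.eval_congr _ fun v hv => ?_
          have hvtake := vars_skSubstVal_univ (sk := sk) hui
            (harity i (mem_univPos.2 ⟨by omega, hui⟩)) hv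
          have := exPos_lt_of_mem_take hvtake
          simp [Function.update, show v ≠ k by omega]
        exact step.trans (le_of_eq (val_of_closed hEclosed _ _))

end Easy

end SkolemAux
namespace SkolemAux

variable {S : Signature}

open Classical in
/-- Pick a witness keeping the value below `c`, if one exists. -/
noncomputable def pick (I : Interp S) (L : List Bool) (P : Formula S)
    (c : unitInterval) (μ' : ℕ → I.D) (k : ℕ) : I.D :=
  if h : ∃ d, (buildPrenex (L.drop (k+1)) (k+1) P).val I (Function.update μ' k d) < c
  then h.choose else Classical.arbitrary I.D

/-- The play of the semantic game after `k` steps: existential variables are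
given by `ν`, universal variables by the `pick` strategy. -/
noncomputable def play (I : Interp S) (L : List Bool) (P : Formula S)
    (c : unitInterval) (μ ν : ℕ → I.D) : ℕ → ℕ → I.D
  | 0 => μ
  | k+1 => Function.update (play I L P c μ ν k) k
      (if L.getD k false = true then pick I L P c (play I L P c μ ν k) k else ν k)

section Hard

variable {I : Interp S} {L : List Bool} {P : Formula S} {c : unitInterval}
  {μ ν ν' : ℕ → I.D}

lemma play_ge : ∀ k n, k ≤ n → play I L P c μ ν k n = μ n
  | 0, n, _ => rfl
  | k+1, n, h => by
      rw [play, Function.update_of_ne (by omega)]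
      exact play_ge k n (by omega)

lemma play_succ_univ {k : ℕ} (h : L.getD k false = true) :
    play I L P c μ ν (k+1) k = pick I L P c (play I L P c μ ν k) k := by
  rw [play, if_pos h, Function.update_self]

lemma play_succ_ex {k : ℕ} (h : L.getD k false = false) :
    play I L P c μ ν (k+1) k = ν k := by
  rw [play, h, if_neg (by simp), Function.update_self]

lemma play_stable : ∀ k j, j < k → play I L P c μ ν k j = play I L P c μ ν (j+1) j
  | 0, j, h => absurd h (by omega)
  | k+1, j, h => by
      by_cases hjk : j = k
      · subst hjk; rfl
      · rw [play, Function.update_of_ne hjk]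
        exact play_stable k j (by omega)

lemma play_congr : ∀ k, (∀ i, i < k → L.getD i false = false → ν i = ν' i) →
    play I L P c μ ν k = play I L P c μ ν' k
  | 0, _ => rfl
  | k+1, h => by
      rw [play, play, play_congr k (fun i hi hex => h i (by omega) hex)]
      by_cases hu : L.getD k false = true
      · rw [if_pos hu, if_pos hu]
      · rw [if_neg hu, if_neg hu, h k (by omega) (by simpa using hu)]

lemma play_lt (h0 : (buildPrenex L 0 P).val I μ < c) :
    ∀ k, k ≤ L.length → (buildPrenex (L.drop k) k P).val I (play I L P c μ ν k) < c
  | 0, _ => by simpa [play] using h0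
  | k+1, h => by
      have prev := play_lt h0 k (by omega)
      rw [List.drop_eq_getElem_cons (show k < L.length by omega)] at prev
      have hgetD : L.getD k false = L[k] := List.getD_eq_getElem L false (by omega)
      by_cases hb : L[k] = true
      · rw [buildPrenex, if_pos hb] at prev
        simp only [Formula.val] at prev
        have hex : ∃ d, (buildPrenex (L.drop (k+1)) (k+1) P).val I
            (Function.update (play I L P c μ ν k) k d) < c := by
          by_contra hno
          push_neg at hno
          exact absurd (le_iInf hno) (not_le.2 prev)
        rw [play, if_pos (hgetD.trans hb)]
        rw [pick, dif_pos hex]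
        exact hex.choose_spec
      · rw [buildPrenex, if_neg hb] at prev
        simp only [Formula.val] at prev
        rw [play, if_neg (by rw [hgetD]; exact hb)]
        exact lt_of_le_of_lt
          (le_iSup (fun d => (buildPrenex (L.drop (k+1)) (k+1) P).val I
            (Function.update (play I L P c μ ν k) k d)) (ν k)) prev

end Hard

/-- Reconstruction of the existential assignment from a tuple of arguments. -/
noncomputable def gIaux (I : Interp S) (L : List Bool) (P : Formula S)
    (c : unitInterval) (μ : ℕ → I.D) (j : ℕ) (args' : ℕ → I.D) : I.D :=
  pick I L P c (play I L P c μ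
    (fun n => if n ∈ exPos (L.take j) then args' ((exPos (L.take j)).idxOf n) else μ n) j) j

open Classical in
/-- The modified interpretation of function symbols: Skolem symbols follow the
`pick` strategy, all other symbols are unchanged. -/
noncomputable def gI (I : Interp S) (L : List Bool) (P : Formula S)
    (c : unitInterval) (μ : ℕ → I.D) (sk : ℕ → S.Func) :
    ∀ f : S.Func, (Fin (S.fArity f) → I.D) → I.D := fun f args =>
  if h : ∃ j ∈ univPos L, sk j = f then
    gIaux I L P c μ h.choose
      (fun i => if hi : i < S.fArity f then args ⟨i, hi⟩ else Classical.arbitrary I.D)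
  else I.fI f args

section Hard2

variable {I : Interp S} {L : List Bool} {P : Formula S} {c : unitInterval}
  {μ : ℕ → I.D} {sk : ℕ → S.Func}

lemma gI_not_sk {f : S.Func} (h : ¬ ∃ j ∈ univPos L, sk j = f) :
    gI I L P c μ sk f = I.fI f := by
  funext args
  simp only [gI]
  rw [dif_neg h]

lemma gI_spec (hinj : ∀ j ∈ univPos L, ∀ j' ∈ univPos L, sk j = sk j' → j = j')
    (harity : ∀ j ∈ univPos L, S.fArity (sk j) = (exPos (List.take j L)).length)
    {j : ℕ} (hj : j ∈ univPos L) (ν : ℕ → I.D) :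
    gI I L P c μ sk (sk j) (fun idx => ν ((exPos (L.take j)).getD idx 0)) =
      pick I L P c (play I L P c μ ν j) j := by
  have h : ∃ j' ∈ univPos L, sk j' = sk j := ⟨j, hj, rfl⟩
  simp only [gI]
  rw [dif_pos h]
  have hjj : h.choose = j := hinj _ h.choose_spec.1 _ hj h.choose_spec.2
  rw [hjj]
  set l := exPos (L.take j) with hl
  have hlen : S.fArity (sk j) = l.length := harity j hj
  have hjlen : j < L.length := (mem_univPos.1 hj).1
  rw [gIaux]
  have hplay : play I L P c μ
      (fun n => if n ∈ l then
        (fun i => if hi : i < S.fArity (sk j) then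
          (fun idx : Fin (S.fArity (sk j)) => ν (l.getD (idx : ℕ) 0)) ⟨i, hi⟩
          else Classical.arbitrary I.D) (l.idxOf n)
        else μ n) j = play I L P c μ ν j := by
    refine play_congr j fun i hi hex => ?_
    have hil : i ∈ l := by
      rw [hl, mem_exPos_take]
      exact ⟨hi, mem_exPos'.2 ⟨by omega, hex⟩⟩
    have hidx : l.idxOf i < l.length := List.idxOf_lt_length_iff.2 hil
    simp only [if_pos hil]
    rw [dif_pos (show l.idxOf i < S.fArity (sk j) by rw [hlen]; exact hidx)]
    congr 1
    rw [List.getD_eq_getElem _ 0 hidx, List.getElem_idxOf hidx]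
  rw [← hplay]

end Hard2

end SkolemAux
namespace SkolemAux

variable {S : Signature}

lemma valid_of_skolem_valid {L : List Bool} {P : Formula S} {sk : ℕ → S.Func}
    (hQF : P.isQF) (hclosed : ∀ v ∈ P.freeVars, v < L.length)
    (harity : ∀ j ∈ univPos L, S.fArity (sk j) = (exPos (List.take j L)).length)
    (hfresh : ∀ j ∈ univPos L, sk j ∉ P.funcsIn)
    (hinj : ∀ j ∈ univPos L, ∀ j' ∈ univPos L, sk j = sk j' → j = j')
    (hs : valid (skolemFormVal L sk P)) : valid (buildPrenex L 0 P) := by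
  intro I μ
  by_contra hne
  have hr : (buildPrenex L 0 P).val I μ < 1 :=
    lt_of_le_of_ne (unit_le_one _) hne
  set r := (buildPrenex L 0 P).val I μ with hrdef
  have hr1 : (r : ℝ) < 1 := by exact_mod_cast hr
  have hr0 : (0:ℝ) ≤ r := r.2.1
  set c : unitInterval := ⟨((r:ℝ)+1)/2, by constructor <;> [linarith; linarith]⟩ with hcdef
  have hrc : r < c := by
    rw [← Subtype.coe_lt_coe]
    show (r:ℝ) < ((r:ℝ)+1)/2
    linarith
  have hc1 : c < 1 := by
    rw [← Subtype.coe_lt_coe]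
    show ((r:ℝ)+1)/2 < ((1:unitInterval):ℝ)
    rw [Set.Icc.coe_one]
    linarith
  set I' : Interp S := ⟨I.D, I.dNe, gI I L P c μ sk, I.pI⟩ with hI'
  have h1 := hs I' μ
  have h2 : (skolemFormVal L sk P).val I' μ ≤ c := by
    rw [skolemFormVal]
    refine val_exCloseList_le _ _ _ fun ν' hν' => ?_
    rw [val_subst_of_isQF P hQF]
    rw [val_fI_congr (gI I L P c μ sk) P (fun f hf => gI_not_sk (by
      rintro ⟨j, hj, rfl⟩
      exact hfresh j hj hf))]
    have hkey : ∀ n ∈ P.freeVars,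
        (fun n => Term.eval I' ν' (skSubstVal L sk n)) n =
          play I L P c μ ν' L.length n := by
      intro n hn
      have hlen : n < L.length := hclosed n hn
      by_cases hu : L.getD n false = true
      · have hjU : n ∈ univPos L := mem_univPos.2 ⟨hlen, hu⟩
        show Term.eval I' ν' (skSubstVal L sk n) = _
        rw [skSubstVal, if_pos hu]
        show gI I L P c μ sk (sk n)
            (fun j => ν' ((exPos (L.take n)).getD (j:ℕ) 0)) = _
        rw [gI_spec (I := I) hinj harity hjU ν']
        rw [play_stable L.length n hlen, play_succ_univ hu]
      · show Term.eval I' ν' (skSubstVal L sk n) = _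
        rw [skSubstVal_ex (by simpa using hu)]
        show ν' n = _
        rw [play_stable L.length n hlen, play_succ_ex (by simpa using hu)]
    rw [val_congr (I := I) P hkey]
    have hlt := play_lt (I := I) (ν := ν') (c := c) (hrdef ▸ hrc) L.length le_rfl
    rw [List.drop_length] at hlt
    exact hlt.le
  rw [h1] at h2
  exact absurd h2 (not_le.2 hc1)

lemma skolem_valid_of_valid {L : List Bool} {P : Formula S} {sk : ℕ → S.Func}
    (hQF : P.isQF) (hclosed : ∀ v ∈ P.freeVars, v < L.length)
    (harity : ∀ j ∈ univPos L, S.fArity (sk j) = (exPos (List.take j L)).length)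
    (hv : valid (buildPrenex L 0 P)) : valid (skolemFormVal L sk P) := by
  intro I μ
  refine le_antisymm (unit_le_one _) ?_
  have h := easy_aux hQF hclosed harity L.length 0 (by omega) μ
    (fun i hi _ => absurd hi (by omega))
  rw [show L.drop 0 = L from rfl] at h
  calc (1 : unitInterval) = (buildPrenex L 0 P).val I μ := (hv I μ).symm
    _ ≤ _ := h

lemma single_iff {L : List Bool} {P : Formula S} {sk : ℕ → S.Func}
    (hQF : P.isQF) (hclosed : ∀ v ∈ P.freeVars, v < L.length)
    (harity : ∀ j ∈ univPos L, S.fArity (sk j) = (exPos (List.take j L)).length)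
    (hfresh : ∀ j ∈ univPos L, sk j ∉ P.funcsIn)
    (hinj : ∀ j ∈ univPos L, ∀ j' ∈ univPos L, sk j = sk j' → j = j') :
    valid (buildPrenex L 0 P) ↔ valid (skolemFormVal L sk P) :=
  ⟨skolem_valid_of_valid hQF hclosed harity,
    valid_of_skolem_valid hQF hclosed harity hfresh hinj⟩

lemma valid_and {A B : Formula S} : valid (.and A B) ↔ valid A ∧ valid B := by
  constructor
  · intro h
    exact ⟨fun I μ => (unit_min_eq_one.1 (h I μ)).1,
      fun I μ => (unit_min_eq_one.1 (h I μ)).2⟩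
  · rintro ⟨h1, h2⟩ I μ
    exact unit_min_eq_one.2 ⟨h1 I μ, h2 I μ⟩

lemma valid_bigAnd : ∀ (l : List (Formula S)) (A : Formula S),
    valid (bigAnd A l) ↔ valid A ∧ ∀ B ∈ l, valid B
  | [], A => by simp [bigAnd]
  | B :: l, A => by
      rw [bigAnd, valid_and, valid_bigAnd l B]
      simp only [List.mem_cons]
      constructor
      · rintro ⟨h1, h2, h3⟩
        exact ⟨h1, fun C hC => hC.elim (fun e => e ▸ h2) (h3 C)⟩
      · rintro ⟨h1, h2⟩
        exact ⟨h1, h2 B (Or.inl rfl), fun C hC => h2 C (Or.inr hC)⟩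

end SkolemAux
/-- soundness of Skolemization for validity in prenex G△: a conjunction
`A₁ ∧ ⋯ ∧ Aₘ` of closed prenex formulas (prefix `pref i`, quantifier-free matrix `P i`)
is valid iff the conjunction of the Skolem forms `∃x̄ Aᵢ^S(x̄)` is valid, where for each
`i` the Skolem function symbols `sk i j` are fresh (pairwise distinct and not occurring
in `P i`) and of the correct arity. -/
theorem skolemization_validity_prenex_Gdelta (S : Signature) (m : ℕ)
    (pref : Fin (m + 1) → List Bool) (P : Fin (m + 1) → Formula S)
    (hQF : ∀ i, (P i).isQF)
    (hclosed : ∀ i, ∀ v ∈ (P i).freeVars, v < (pref i).length)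
    (sk : Fin (m + 1) → ℕ → S.Func)
    (harity : ∀ i, ∀ j ∈ univPos (pref i),
      S.fArity (sk i j) = (exPos (List.take j (pref i))).length)
    (hfresh : ∀ i, ∀ j ∈ univPos (pref i), sk i j ∉ (P i).funcsIn)
    (hinj : ∀ i, ∀ j ∈ univPos (pref i), ∀ j' ∈ univPos (pref i),
      sk i j = sk i j' → j = j') :
    valid (bigAnd (buildPrenex (pref 0) 0 (P 0))
        (List.ofFn (fun i : Fin m => buildPrenex (pref i.succ) 0 (P i.succ)))) ↔
      valid (bigAnd (skolemFormVal (pref 0) (sk 0) (P 0))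
        (List.ofFn (fun i : Fin m =>
          skolemFormVal (pref i.succ) (sk i.succ) (P i.succ)))) := by
  have hiff : ∀ i : Fin (m + 1),
      valid (buildPrenex (pref i) 0 (P i)) ↔
        valid (skolemFormVal (pref i) (sk i) (P i)) := fun i =>
    SkolemAux.single_iff (hQF i) (hclosed i) (harity i) (hfresh i) (hinj i)
  rw [SkolemAux.valid_bigAnd, SkolemAux.valid_bigAnd]
  simp only [List.mem_ofFn]
  constructor
  · rintro ⟨h0, hrest⟩
    refine ⟨(hiff 0).1 h0, ?_⟩
    rintro B ⟨i, rfl⟩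
    exact (hiff i.succ).1 (hrest _ ⟨i, rfl⟩)
  · rintro ⟨h0, hrest⟩
    refine ⟨(hiff 0).2 h0, ?_⟩
    rintro B ⟨i, rfl⟩
    exact (hiff i.succ).2 (hrest _ ⟨i, rfl⟩)
end

section
/- SAT-Skolemization, step 1: let A₁, …, Aₘ be closed prenex formulas of first-order Gödel logic with △ and let q be a fresh monadic predicate symbol. Then A₁ ∧ ⋯ ∧ Aₘ is 1-satisfiable if and only if ∃x q(x) ∧ sk_q(A₁) ∧ ⋯ ∧ sk_q(Aₘ) is 1-satisfiable. -/
/-- The SAT-Skolem substitution (Definition of `Ψ_q`): each existentially quantified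
variable `i` is replaced by the Skolem term `f i (zᵢ, z₀, …, z_{i-1})` (the guard
variable `zᵢ` followed by the free variables at that point); universal variables are
kept. -/
def skSubstSatQ {S : Signature} (pref : List Bool) (skf : ℕ → S.Func) : ℕ → Term S :=
  fun i =>
    if pref.getD i true = false then
      Term.func (skf i)
        (fun j => Term.var (if (j : ℕ) = 0 then i else (j : ℕ) - 1))
    else Term.var i

/-- The atom `q(t)` for a monadic predicate symbol `q`. -/
def qAtom {S : Signature} (q : S.Pred) (t : Term S) : Formula S :=
  .atom q (fun _ => t)

/-- `guards q [i₁,…,iₙ] B = q(z_{i₁}) → (q(z_{i₂}) → … (q(z_{iₙ}) → B))`: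
the guards `q(x) → ·` produced by `Ψ_q` at the existential positions. -/
def guards {S : Signature} (q : S.Pred) : List ℕ → Formula S → Formula S
  | [], B => B
  | i :: xs, B => .imp (qAtom q (.var i)) (guards q xs B)

/-- The SAT-Skolem form `sk_q(A) = ∀x̄ △(Ψ_q(A)⁻)` of the prenex formula with prefix
`pref` and quantifier-free matrix `P`. -/
def skq {S : Signature} (q : S.Pred) (skf : ℕ → S.Func) (pref : List Bool)
    (P : Formula S) : Formula S :=
  allCloseList (List.range pref.length)
    (.delta (guards q (exPos pref) (P.subst (skSubstSatQ pref skf))))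

/-- The formula `∃x q(x)`. -/
def exQ {S : Signature} (q : S.Pred) : Formula S := .ex 0 (qAtom q (.var 0))

section SK
open Classical

variable {S : Signature}

/-! ### basic unit interval lemmas -/

lemma ui_le_one (a : unitInterval) : a ≤ 1 := unitInterval.le_one'

lemma iInf_eq_one_iff {ι : Sort*} (f : ι → unitInterval) : (⨅ i, f i) = 1 ↔ ∀ i, f i = 1 := by
  constructor
  · intro h i
    exact le_antisymm (ui_le_one _) (h ▸ iInf_le f i)
  · intro h
    exact le_antisymm (ui_le_one _) (le_iInf fun i => (h i).ge)

lemma exists_lt_of_lt_iSup {ι : Sort*} (f : ι → unitInterval) (b : unitInterval)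
    (h : b < ⨆ i, f i) : ∃ i, b < f i := by
  by_contra hc
  push_neg at hc
  exact absurd (iSup_le hc) (not_le.mpr h)

lemma ui_min_eq_one_iff (a b : unitInterval) : min a b = 1 ↔ a = 1 ∧ b = 1 := by
  constructor
  · intro h
    exact ⟨le_antisymm (ui_le_one _) (h ▸ min_le_left a b),
      le_antisymm (ui_le_one _) (h ▸ min_le_right a b)⟩
  · rintro ⟨rfl, rfl⟩; simp

lemma gimp_eq_one_iff (a b : unitInterval) : gimp a b = 1 ↔ a ≤ b := by
  unfold gimp
  split
  · simp_all
  · constructor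
    · rintro rfl; exact ui_le_one a
    · intro h; simp_all

lemma gdelta_eq_one_iff (a : unitInterval) : gdelta a = 1 ↔ a = 1 := by
  unfold gdelta
  split
  · simp_all
  · constructor
    · intro h'
      exact absurd (Subtype.ext_iff.mp h') (by norm_num)
    · intro h'; simp_all

/-! ### congruence lemmas -/

lemma Term.eval_congr (I : Interp S) {μ μ' : ℕ → I.D} (t : Term S)
    (h : ∀ v ∈ t.vars, μ v = μ' v) : t.eval I μ = t.eval I μ' := by
  induction t with
  | var n => exact h n (by simp [Term.vars])
  | func f args ih =>
      simp only [Term.eval]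
      congr 1
      funext i
      exact ih i fun v hv => h v (Set.mem_iUnion.mpr ⟨i, hv⟩)

lemma Formula.val_congr (I : Interp S) {μ μ' : ℕ → I.D} (A : Formula S)
    (h : ∀ v ∈ A.freeVars, μ v = μ' v) : A.val I μ = A.val I μ' := by
  induction A generalizing μ μ' with
  | bot => rfl
  | top => rfl
  | atom p args =>
      simp only [Formula.val]
      congr 1
      funext i
      exact Term.eval_congr I (args i) fun v hv => h v (Set.mem_iUnion.mpr ⟨i, hv⟩)
  | and A B ihA ihB =>
      simp only [Formula.val]
      rw [ihA fun v hv => h v (Or.inl hv), ihB fun v hv => h v (Or.inr hv)]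
  | or A B ihA ihB =>
      simp only [Formula.val]
      rw [ihA fun v hv => h v (Or.inl hv), ihB fun v hv => h v (Or.inr hv)]
  | imp A B ihA ihB =>
      simp only [Formula.val]
      rw [ihA fun v hv => h v (Or.inl hv), ihB fun v hv => h v (Or.inr hv)]
  | delta A ihA =>
      simp only [Formula.val]
      rw [ihA h]
  | all x A ihA =>
      simp only [Formula.val]
      congr 1
      funext d
      refine ihA fun v hv => ?_
      by_cases hvx : v = x
      · subst hvx; simp
      · simp only [Function.update, dif_neg hvx]
        exact h v ⟨hv, hvx⟩
  | ex x A ihA =>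
      simp only [Formula.val]
      congr 1
      funext d
      refine ihA fun v hv => ?_
      by_cases hvx : v = x
      · subst hvx; simp
      · simp only [Function.update, dif_neg hvx]
        exact h v ⟨hv, hvx⟩

/-! ### substitution lemmas -/

lemma Term.eval_subst (I : Interp S) (μ : ℕ → I.D) (σ : ℕ → Term S) (t : Term S) :
    (t.subst σ).eval I μ = t.eval I (fun n => (σ n).eval I μ) := by
  induction t with
  | var n => rfl
  | func f args ih =>
      simp only [Term.subst, Term.eval]
      congr 1
      funext i
      exact ih i

lemma Formula.val_subst (I : Interp S) (μ : ℕ → I.D) (σ : ℕ → Term S) (A : Formula S)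
    (hA : A.isQF) : (A.subst σ).val I μ = A.val I (fun n => (σ n).eval I μ) := by
  induction A with
  | bot => rfl
  | top => rfl
  | atom p args =>
      simp only [Formula.subst, Formula.val]
      congr 1
      funext i
      exact Term.eval_subst I μ σ (args i)
  | and A B ihA ihB => simp only [Formula.subst, Formula.val, ihA hA.1, ihB hA.2]
  | or A B ihA ihB => simp only [Formula.subst, Formula.val, ihA hA.1, ihB hA.2]
  | imp A B ihA ihB => simp only [Formula.subst, Formula.val, ihA hA.1, ihB hA.2]
  | delta A ihA => simp only [Formula.subst, Formula.val, ihA hA]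
  | all x A ihA => exact absurd hA id
  | ex x A ihA => exact absurd hA id

lemma Term.vars_subst (σ : ℕ → Term S) (t : Term S) :
    (t.subst σ).vars ⊆ ⋃ v ∈ t.vars, (σ v).vars := by
  induction t with
  | var n => simp [Term.subst, Term.vars]
  | func f args ih =>
      intro w hw
      simp only [Term.subst, Term.vars, Set.mem_iUnion] at hw
      obtain ⟨i, hi⟩ := hw
      obtain ⟨v, hv, hw⟩ := Set.mem_iUnion₂.mp (ih i hi)
      exact Set.mem_iUnion₂.mpr ⟨v, Set.mem_iUnion.mpr ⟨i, hv⟩, hw⟩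

lemma Formula.freeVars_subst (σ : ℕ → Term S) (A : Formula S) (hA : A.isQF) :
    (A.subst σ).freeVars ⊆ ⋃ v ∈ A.freeVars, (σ v).vars := by
  induction A with
  | bot => simp [Formula.subst, Formula.freeVars]
  | top => simp [Formula.subst, Formula.freeVars]
  | atom p args =>
      intro w hw
      simp only [Formula.subst, Formula.freeVars, Set.mem_iUnion] at hw
      obtain ⟨i, hi⟩ := hw
      obtain ⟨v, hv, hw⟩ := Set.mem_iUnion₂.mp (Term.vars_subst σ (args i) hi)
      exact Set.mem_iUnion₂.mpr ⟨v, Set.mem_iUnion.mpr ⟨i, hv⟩, hw⟩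
  | and A B ihA ihB =>
      intro w hw
      rcases hw with hw | hw
      · obtain ⟨v, hv, hw⟩ := Set.mem_iUnion₂.mp (ihA hA.1 hw)
        exact Set.mem_iUnion₂.mpr ⟨v, Or.inl hv, hw⟩
      · obtain ⟨v, hv, hw⟩ := Set.mem_iUnion₂.mp (ihB hA.2 hw)
        exact Set.mem_iUnion₂.mpr ⟨v, Or.inr hv, hw⟩
  | or A B ihA ihB =>
      intro w hw
      rcases hw with hw | hw
      · obtain ⟨v, hv, hw⟩ := Set.mem_iUnion₂.mp (ihA hA.1 hw)
        exact Set.mem_iUnion₂.mpr ⟨v, Or.inl hv, hw⟩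
      · obtain ⟨v, hv, hw⟩ := Set.mem_iUnion₂.mp (ihB hA.2 hw)
        exact Set.mem_iUnion₂.mpr ⟨v, Or.inr hv, hw⟩
  | imp A B ihA ihB =>
      intro w hw
      rcases hw with hw | hw
      · obtain ⟨v, hv, hw⟩ := Set.mem_iUnion₂.mp (ihA hA.1 hw)
        exact Set.mem_iUnion₂.mpr ⟨v, Or.inl hv, hw⟩
      · obtain ⟨v, hv, hw⟩ := Set.mem_iUnion₂.mp (ihB hA.2 hw)
        exact Set.mem_iUnion₂.mpr ⟨v, Or.inr hv, hw⟩
  | delta A ihA => exact ihA hA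
  | all x A ihA => exact absurd hA id
  | ex x A ihA => exact absurd hA id

/-! ### guards, closures, bigAnd, buildPrenex -/

/-- minimum of a list of unit interval values (empty = 1). -/
noncomputable def lmin (l : List unitInterval) : unitInterval := l.foldr min 1

lemma lmin_nil : lmin [] = 1 := rfl

lemma lmin_cons (a : unitInterval) (l : List unitInterval) : lmin (a :: l) = min a (lmin l) := rfl

lemma lmin_le_one (l : List unitInterval) : lmin l ≤ 1 := ui_le_one _

lemma foldr_min_eq (b : unitInterval) (l : List unitInterval) :
    l.foldr min b = min (lmin l) b := by
  induction l with
  | nil => show b = min 1 b; rw [min_eq_right (ui_le_one b)]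
  | cons a l ih =>
      simp only [List.foldr_cons, ih, lmin_cons]
      rw [min_assoc]

lemma lmin_append (l₁ l₂ : List unitInterval) : lmin (l₁ ++ l₂) = min (lmin l₁) (lmin l₂) := by
  unfold lmin
  rw [List.foldr_append, foldr_min_eq (l₂.foldr min 1) l₁]
  rfl

lemma lmin_singleton (a : unitInterval) : lmin [a] = a := by
  simp only [lmin, List.foldr]
  exact min_eq_left (ui_le_one a)

lemma guards_val (I : Interp S) (μ : ℕ → I.D) (q : S.Pred) (L : List ℕ) (B : Formula S) :
    Formula.val I μ (guards q L B) =
      if lmin (L.map fun i => Formula.val I μ (qAtom q (.var i))) ≤ B.val I μ then 1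
      else B.val I μ := by
  induction L with
  | nil =>
      show B.val I μ = _
      simp only [List.map_nil, lmin_nil]
      by_cases h : (1:unitInterval) ≤ B.val I μ
      · rw [if_pos h]; exact le_antisymm (ui_le_one _) h
      · rw [if_neg h]
  | cons i L ih =>
      simp only [guards, List.map_cons, lmin_cons]
      show gimp _ _ = _
      rw [ih]
      set g := Formula.val I μ (qAtom q (.var i))
      set r := lmin (L.map fun i => Formula.val I μ (qAtom q (.var i)))
      set b := B.val I μ
      by_cases h1 : r ≤ b
      · rw [if_pos h1, if_pos (le_trans (min_le_right g r) h1)]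
        unfold gimp
        rw [if_pos (ui_le_one g)]
      · rw [if_neg h1]
        unfold gimp
        by_cases h2 : g ≤ b
        · rw [if_pos h2, if_pos (le_trans (min_le_left g r) h2)]
        · rw [if_neg h2, if_neg]
          intro hc
          rcases le_total g r with h | h
          · rw [min_eq_left h] at hc; exact h2 hc
          · rw [min_eq_right h] at hc; exact h1 hc

lemma delta_guards_val_eq_one_iff (I : Interp S) (μ : ℕ → I.D) (q : S.Pred) (L : List ℕ)
    (B : Formula S) :
    Formula.val I μ (.delta (guards q L B)) = 1 ↔
      lmin (L.map fun i => Formula.val I μ (qAtom q (.var i))) ≤ B.val I μ := by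
  show gdelta _ = 1 ↔ _
  rw [gdelta_eq_one_iff, guards_val]
  split
  · simp_all
  · rename_i h
    constructor
    · intro hb; exact hb ▸ lmin_le_one _
    · intro hb; exact absurd hb h

lemma allCloseList_val_eq_one_iff (I : Interp S) (μ : ℕ → I.D) (L : List ℕ) (B : Formula S) :
    Formula.val I μ (allCloseList L B) = 1 ↔
      ∀ μ' : ℕ → I.D, (∀ i, i ∉ L → μ' i = μ i) → B.val I μ' = 1 := by
  induction L generalizing μ with
  | nil =>
      simp only [allCloseList]
      constructor
      · intro h μ' hμ'
        have : μ' = μ := funext fun i => hμ' i (List.not_mem_nil (a := i))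
        rwa [this]
      · intro h; exact h μ fun _ _ => rfl
  | cons x xs ih =>
      show (⨅ d, Formula.val I (Function.update μ x d) (allCloseList xs B)) = 1 ↔ _
      rw [iInf_eq_one_iff]
      constructor
      · intro h μ' hμ'
        refine (ih (Function.update μ x (μ' x))).mp (h (μ' x)) μ' fun i hi => ?_
        by_cases hix : i = x
        · subst hix; simp
        · rw [Function.update_of_ne hix]
          exact hμ' i (by simp [hix, hi])
      · intro h d
        refine (ih (Function.update μ x d)).mpr fun μ' hμ' => h μ' fun i hi => ?_
        simp only [List.mem_cons, not_or] at hi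
        rw [hμ' i hi.2, Function.update_of_ne hi.1]

lemma bigAnd_val_eq_one_iff (I : Interp S) (μ : ℕ → I.D) (A : Formula S) (L : List (Formula S)) :
    Formula.val I μ (bigAnd A L) = 1 ↔ A.val I μ = 1 ∧ ∀ B ∈ L, B.val I μ = 1 := by
  induction L generalizing A with
  | nil => simp [bigAnd]
  | cons B l ih =>
      show min (A.val I μ) _ = 1 ↔ _
      rw [ui_min_eq_one_iff, ih]
      constructor
      · rintro ⟨h1, h2, h3⟩
        exact ⟨h1, fun C hC => by rw [List.mem_cons] at hC; rcases hC with rfl | hC; exacts [h2, h3 C hC]⟩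
      · rintro ⟨h1, h2⟩
        exact ⟨h1, h2 B (by simp), fun C hC => h2 C (by simp [hC])⟩

lemma mem_exPos (pref : List Bool) (j : ℕ) :
    j ∈ exPos pref ↔ j < pref.length ∧ pref.getD j true = false := by
  simp [exPos, List.mem_filter, List.mem_range]

lemma freeVars_buildPrenex (l : List Bool) (i : ℕ) (P : Formula S) :
    ∀ v ∈ (buildPrenex l i P).freeVars, v ∈ P.freeVars ∧ (v < i ∨ i + l.length ≤ v) := by
  induction l generalizing i with
  | nil =>
      intro v hv
      exact ⟨hv, by simpa using Nat.lt_or_ge v i⟩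
  | cons b rest ih =>
      intro v hv
      simp only [buildPrenex] at hv
      split at hv
      all_goals {
        obtain ⟨hv, hvi⟩ := hv
        obtain ⟨h1, h2⟩ := ih (i+1) v hv
        refine ⟨h1, ?_⟩
        simp only [Set.mem_singleton_iff] at hvi
        simp only [List.length_cons]
        omega }

/-! ### prenex bodies and guard minima -/

/-- the partially quantified prenex formula from position `j` on. -/
def Bform (pref : List Bool) (P : Formula S) (j : ℕ) : Formula S :=
  buildPrenex (pref.drop j) j P

lemma Bform_zero (pref : List Bool) (P : Formula S) : Bform pref P 0 = buildPrenex pref 0 P := by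
  simp [Bform]

lemma Bform_length (pref : List Bool) (P : Formula S) : Bform pref P pref.length = P := by
  simp [Bform, List.drop_length, buildPrenex]

lemma Bform_succ (pref : List Bool) (P : Formula S) (n : ℕ) (hn : n < pref.length) :
    Bform pref P n =
      if pref.getD n true then .all n (Bform pref P (n+1)) else .ex n (Bform pref P (n+1)) := by
  unfold Bform
  rw [List.drop_eq_getElem_cons hn, List.getD_eq_getElem pref true hn]
  rfl

lemma freeVars_Bform_lt {pref : List Bool} {P : Formula S}
    (hclosed : ∀ v ∈ P.freeVars, v < pref.length) (j : ℕ) (hj : j ≤ pref.length) :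
    ∀ v ∈ (Bform pref P j).freeVars, v < j := by
  intro v hv
  obtain ⟨h1, h2⟩ := freeVars_buildPrenex (pref.drop j) j P v hv
  have := hclosed v h1
  rw [List.length_drop] at h2
  omega

/-- minimum of the guard values at the existential positions `< n`. -/
noncomputable def MvalG {D : Type} (pref : List Bool) (Q : D → unitInterval) (z : ℕ → D)
    (n : ℕ) : unitInterval :=
  lmin ((((List.range n).filter (fun i => pref.getD i true = false)).map fun i => Q (z i)))

lemma MvalG_zero {D : Type} (pref : List Bool) (Q : D → unitInterval) (z : ℕ → D) :
    MvalG pref Q z 0 = 1 := rfl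

lemma MvalG_succ_univ {D : Type} (pref : List Bool) (Q : D → unitInterval) (z : ℕ → D) (n : ℕ)
    (hn : ¬ pref.getD n true = false) : MvalG pref Q z (n+1) = MvalG pref Q z n := by
  unfold MvalG
  rw [List.range_succ, List.filter_append]
  have h0 : List.filter (fun i => decide (pref.getD i true = false)) [n] = [] := by
    have h1 : pref.getD n true = true := by revert hn; cases pref.getD n true <;> simp
    rw [List.getD_eq_getElem?_getD] at h1
    simp [List.filter_singleton, h1]
  rw [h0, List.append_nil]

lemma MvalG_succ_ex {D : Type} (pref : List Bool) (Q : D → unitInterval) (z : ℕ → D) (n : ℕ)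
    (hn : pref.getD n true = false) :
    MvalG pref Q z (n+1) = min (MvalG pref Q z n) (Q (z n)) := by
  unfold MvalG
  have h0 : List.filter (fun i => decide (pref.getD i true = false)) [n] = [n] := by
    have h1 := hn
    rw [List.getD_eq_getElem?_getD] at h1
    simp [List.filter_singleton, h1]
  rw [List.range_succ, List.filter_append, h0, List.map_append, lmin_append]
  congr 1
  exact lmin_singleton _

lemma MvalG_congr {D : Type} (pref : List Bool) (Q : D → unitInterval) (z z' : ℕ → D) (n : ℕ)
    (h : ∀ i < n, z i = z' i) : MvalG pref Q z n = MvalG pref Q z' n := by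
  unfold MvalG
  congr 1
  refine List.map_congr_left fun i hi => ?_
  rw [h i (List.mem_range.mp (List.mem_of_mem_filter hi))]

lemma MvalG_le_one {D : Type} (pref : List Bool) (Q : D → unitInterval) (z : ℕ → D) (n : ℕ) :
    MvalG pref Q z n ≤ 1 := ui_le_one _

lemma MvalG_length_eq_exPos (I : Interp S) (q : S.Pred) (μ : ℕ → I.D)
    (pref : List Bool)
    (hval : ∀ i, Formula.val I μ (qAtom q (.var i)) = (fun d => I.pI q fun _ => d) (μ i)) :
    lmin ((exPos pref).map fun i => Formula.val I μ (qAtom q (.var i))) =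
      MvalG pref (fun d => I.pI q fun _ => d) μ pref.length := by
  unfold MvalG exPos
  exact congrArg lmin (List.map_congr_left fun i _ => hval i)

/-! ### the Skolem substitution -/

lemma ex_of_getD_false (pref : List Bool) (n : ℕ) (h : pref.getD n true = false) :
    n ∈ exPos pref := by
  rw [mem_exPos]
  refine ⟨?_, h⟩
  by_contra hn
  rw [List.getD_eq_default pref true (by omega)] at h
  simp at h

lemma vars_skSubst (pref : List Bool) (skf : ℕ → S.Func)
    (harity : ∀ j ∈ exPos pref, S.fArity (skf j) = j + 1) (n : ℕ) :
    ∀ v ∈ (skSubstSatQ pref skf n).vars, v ≤ n := by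
  intro v hv
  unfold skSubstSatQ at hv
  split at hv
  · rename_i h
    have harr := harity n (ex_of_getD_false pref n h)
    simp only [Term.vars, Set.mem_iUnion] at hv
    obtain ⟨j, hj⟩ := hv
    simp only [Term.vars, Set.mem_singleton_iff] at hj
    subst hj
    split
    · exact le_refl n
    · have := j.isLt
      omega
  · simp only [Term.vars, Set.mem_singleton_iff] at hv
    omega

/-! ### backward direction, per conjunct -/

lemma backward_conjunct (I : Interp S) (q : S.Pred) (pref : List Bool) (P : Formula S)
    (skf : ℕ → S.Func) (hQF : P.isQF) (hclosed : ∀ v ∈ P.freeVars, v < pref.length)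
    (harity : ∀ j ∈ exPos pref, S.fArity (skf j) = j + 1)
    (supQ : (⨆ d : I.D, I.pI q fun _ => d) = 1)
    (hsk : ∀ z : ℕ → I.D, Formula.val I z
        (.delta (guards q (exPos pref) (P.subst (skSubstSatQ pref skf)))) = 1)
    (μ : ℕ → I.D) :
    Formula.val I μ (buildPrenex pref 0 P) = 1 := by
  classical
  set QI : I.D → unitInterval := fun d => I.pI q fun _ => d with hQI
  set W : (ℕ → I.D) → ℕ → I.D := fun z n => (skSubstSatQ pref skf n).eval I z with hW
  -- W congruence
  have Wcongr : ∀ (z z' : ℕ → I.D) (n : ℕ), (∀ i ≤ n, z i = z' i) → W z n = W z' n := by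
    intro z z' n h
    exact Term.eval_congr I _ fun v hv => h v (vars_skSubst pref skf harity n v hv)
  -- base of the induction
  have base : ∀ z : ℕ → I.D,
      MvalG pref QI z pref.length ≤ Formula.val I (fun n => W z n) P := by
    intro z
    have h1 := (delta_guards_val_eq_one_iff I z q (exPos pref)
      (P.subst (skSubstSatQ pref skf))).mp (hsk z)
    rw [Formula.val_subst I z _ P hQF] at h1
    rw [MvalG_length_eq_exPos I q z pref (fun i => by simp [qAtom, Formula.val, Term.eval])] at h1
    exact h1
  -- downward induction
  have main : ∀ (d j : ℕ), j + d = pref.length → ∀ z : ℕ → I.D,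
      MvalG pref QI z j ≤ Formula.val I (fun n => W z n) (Bform pref P j) := by
    intro d
    induction d with
    | zero =>
        intro j hj z
        have : j = pref.length := by omega
        subst this
        rw [Bform_length]
        exact base z
    | succ d ih =>
        intro j hj z
        have hjlen : j < pref.length := by omega
        have hstep := ih (j+1) (by omega)
        -- congruence for the body under updated assignments
        have hbody : ∀ (z' : ℕ → I.D) (e : I.D), (∀ i < j, z' i = z i) → W z' j = e →
            Formula.val I (Function.update (fun n => W z n) j e) (Bform pref P (j+1)) =
            Formula.val I (fun n => W z' n) (Bform pref P (j+1)) := by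
          intro z' e hlt hj'
          refine Formula.val_congr I _ fun v hv => ?_
          have hvj : v < j + 1 := freeVars_Bform_lt hclosed (j+1) (by omega) v hv
          by_cases hvj' : v = j
          · subst hvj'; simp [hj']
          · have hvlt : v < j := by omega
            rw [Function.update_of_ne hvj']
            exact Wcongr z z' v fun i hi => (hlt i (by omega)).symm
        by_cases hb : pref.getD j true = false
        · -- existential step
          rw [Bform_succ pref P j hjlen, if_neg (by rw [hb]; decide)]
          show MvalG pref QI z j ≤ ⨆ e, Formula.val I (Function.update (fun n => W z n) j e)
            (Bform pref P (j+1))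
          by_contra hlt
          push_neg at hlt
          set sup := ⨆ e, Formula.val I (Function.update (fun n => W z n) j e)
            (Bform pref P (j+1)) with hsup
          have hQle : ∀ e : I.D, QI e ≤ sup := by
            intro e
            set z' := Function.update z j e with hz'
            have h1 : Formula.val I (fun n => W z' n) (Bform pref P (j+1)) ≤ sup := by
              rw [← hbody z' (W z' j) (fun i hi => Function.update_of_ne (show i ≠ j by omega) e z) rfl]
              exact le_iSup (fun e => Formula.val I (Function.update (fun n => W z n) j e) (Bform pref P (j+1))) (W z' j)
            have h2 : MvalG pref QI z' (j+1) ≤ sup :=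
              le_trans (hstep z') h1
            rw [MvalG_succ_ex pref QI z' j hb,
              MvalG_congr pref QI z' z j (fun i hi => Function.update_of_ne (show i ≠ j by omega) e z)] at h2
            have hz'j : z' j = e := Function.update_self j e z
            rw [hz'j] at h2
            by_contra hQ
            push_neg at hQ
            exact absurd h2 (not_le.mpr (lt_min hlt hQ))
          have : (1 : unitInterval) ≤ sup := supQ ▸ iSup_le hQle
          exact absurd (lt_of_le_of_lt this hlt) (not_lt.mpr (MvalG_le_one pref QI z j))
        · -- universal step
          have hb' : pref.getD j true = true := by revert hb; cases pref.getD j true <;> simp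
          rw [Bform_succ pref P j hjlen, if_pos hb']
          show MvalG pref QI z j ≤ ⨅ e, Formula.val I (Function.update (fun n => W z n) j e)
            (Bform pref P (j+1))
          refine le_iInf fun e => ?_
          set z' := Function.update z j e with hz'
          have hWj : W z' j = e := by
            show (skSubstSatQ pref skf j).eval I z' = e
            unfold skSubstSatQ
            rw [if_neg (by rw [hb']; decide)]
            exact Function.update_self j e z
          rw [hbody z' e (fun i hi => Function.update_of_ne (show i ≠ j by omega) e z) hWj]
          refine le_trans ?_ (hstep z')
          rw [MvalG_succ_univ pref QI z' j (by rw [hb']; decide),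
            MvalG_congr pref QI z' z j (fun i hi => Function.update_of_ne (show i ≠ j by omega) e z)]
  -- conclude
  have h0 := main pref.length 0 (by omega) μ
  rw [MvalG_zero] at h0
  have h1 : Formula.val I (fun n => W μ n) (Bform pref P 0) = 1 :=
    le_antisymm (ui_le_one _) h0
  rw [Bform_zero] at h1
  rw [← h1]
  refine Formula.val_congr I _ fun v hv => ?_
  have := freeVars_Bform_lt hclosed 0 (by omega) v (by rwa [Bform_zero])
  omega

/-! ### forward direction: witness construction -/

/-- the guard values in the expanded model: `q(d, n) = 1 - 1/(n+1)`. -/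
noncomputable def Qv (I : Interp S) (x : I.D × ℕ) : unitInterval :=
  ⟨1 - 1/(x.2+1), by
    constructor
    · have : (1:ℝ)/(x.2+1) ≤ 1 := by
        rw [div_le_one (by positivity)]
        linarith [Nat.cast_nonneg (α := ℝ) x.2]
      linarith
    · have : (0:ℝ) < 1/(x.2+1) := by positivity
      linarith⟩

lemma Qv_lt_one (I : Interp S) (x : I.D × ℕ) : Qv I x < 1 := by
  rw [← Subtype.coe_lt_coe]
  show (1:ℝ) - 1/(x.2+1) < 1
  have h : (0:ℝ) < 1/(x.2+1) := by positivity
  linarith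

lemma iSup_Qv (I : Interp S) : (⨆ x : I.D × ℕ, Qv I x) = 1 := by
  refine le_antisymm (ui_le_one _) ?_
  by_contra h
  push_neg at h
  set s := ⨆ x : I.D × ℕ, Qv I x with hs
  have hslt : (s : ℝ) < 1 := h
  obtain ⟨n, hn⟩ := exists_nat_one_div_lt (show (0:ℝ) < 1 - s by linarith)
  have h1 : Qv I (Classical.choice I.dNe, n) ≤ s := le_iSup (Qv I) _
  have h2 : (1:ℝ) - 1/(n+1) ≤ s := h1
  linarith
  
/-- choice of a witness for the existential quantifier at position `n`. -/
noncomputable def pick (pref : List Bool) (P : Formula S) (I : Interp S) (w : ℕ → I.D)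
    (n : ℕ) (g : unitInterval) : I.D :=
  if h : ∃ d, g < Formula.val I (Function.update w n d) (Bform pref P (n+1)) then h.choose
  else Classical.choice I.dNe

/-- the witnesses determined by a raw assignment in the expanded model. -/
noncomputable def wit (pref : List Bool) (P : Formula S) (I : Interp S)
    (z : ℕ → I.D × ℕ) : ℕ → I.D
  | n =>
    if pref.getD n true = false then
      pick pref P I (fun i => if h : i < n then wit pref P I z i else Classical.choice I.dNe) n
        (MvalG pref (Qv I) z (n+1))
    else (z n).1
  termination_by n => n
  decreasing_by exact h

lemma wit_eq (pref : List Bool) (P : Formula S) (I : Interp S) (z : ℕ → I.D × ℕ) (n : ℕ) :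
    wit pref P I z n =
      if pref.getD n true = false then
        pick pref P I (fun i => if h : i < n then wit pref P I z i else Classical.choice I.dNe) n
          (MvalG pref (Qv I) z (n+1))
      else (z n).1 := by
  rw [wit]

lemma wit_congr (pref : List Bool) (P : Formula S) (I : Interp S) (z z' : ℕ → I.D × ℕ)
    (n : ℕ) (h : ∀ i ≤ n, z i = z' i) : wit pref P I z n = wit pref P I z' n := by
  induction n using Nat.strong_induction_on with
  | _ n ih =>
      rw [wit, wit]
      split
      · congr 1
        · funext i
          split
          · rename_i hi
            exact ih i hi fun j hj => h j (by omega)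
          · rfl
        · exact MvalG_congr pref (Qv I) z z' (n+1) fun i hi => h i (by omega)
      · rw [h n (le_refl n)]

lemma wit_invariant (pref : List Bool) (P : Formula S) (I : Interp S)
    (hclosed : ∀ v ∈ P.freeVars, v < pref.length)
    (h1 : ∃ μ0 : ℕ → I.D, Formula.val I μ0 (buildPrenex pref 0 P) = 1) :
    ∀ n, n ≤ pref.length → ∀ z : ℕ → I.D × ℕ,
      Formula.val I (wit pref P I z) (Bform pref P n) = 1 ∨
        MvalG pref (Qv I) z n < Formula.val I (wit pref P I z) (Bform pref P n) := by
  intro n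
  induction n with
  | zero =>
      intro _ z
      left
      obtain ⟨μ0, hμ0⟩ := h1
      rw [Bform_zero, ← hμ0]
      refine Formula.val_congr I _ fun v hv => ?_
      exact absurd (freeVars_Bform_lt hclosed 0 (by omega) v (by rwa [Bform_zero])) (by omega)
  | succ n ih =>
      intro hn z
      have hnlen : n < pref.length := by omega
      have hIH := ih (by omega) z
      set B' := Bform pref P (n+1) with hB'
      set μ := wit pref P I z with hμ
      have hcongrB : ∀ (w w' : ℕ → I.D), (∀ v < n + 1, w v = w' v) →
          Formula.val I w B' = Formula.val I w' B' := by
        intro w w' hw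
        exact Formula.val_congr I B' fun v hv =>
          hw v (freeVars_Bform_lt hclosed (n+1) (by omega) v hv)
      by_cases hb : pref.getD n true = false
      · -- existential step
        rw [Bform_succ pref P n hnlen, if_neg (by rw [hb]; decide)] at hIH
        set m' := MvalG pref (Qv I) z (n+1) with hm'
        have hmlt : m' < ⨆ d, Formula.val I (Function.update μ n d) B' := by
          show m' < Formula.val I μ (.ex n B')
          rw [hm', MvalG_succ_ex pref (Qv I) z n hb]
          rcases hIH with h | h
          · rw [h]
            exact lt_of_le_of_lt (min_le_right _ _) (Qv_lt_one I (z n))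
          · exact lt_of_le_of_lt (min_le_left _ _) h
        obtain ⟨d, hd⟩ := exists_lt_of_lt_iSup _ _ hmlt
        set w : ℕ → I.D := fun i => if h : i < n then wit pref P I z i else Classical.choice I.dNe
          with hw
        have hwcong : ∀ e : I.D, Formula.val I (Function.update w n e) B' =
            Formula.val I (Function.update μ n e) B' := by
          intro e
          refine hcongrB _ _ fun v hv => ?_
          by_cases hvn : v = n
          · subst hvn; simp
          · rw [Function.update_of_ne hvn, Function.update_of_ne hvn, hw]
            simp [show v < n by omega, hμ]
        have hex : ∃ e, m' < Formula.val I (Function.update w n e) B' :=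
          ⟨d, (hwcong d) ▸ hd⟩
        have hwitn : μ n = pick pref P I w n m' := by rw [hμ]; rw [wit]; rw [if_pos hb]
        have hpick : m' < Formula.val I (Function.update w n (pick pref P I w n m')) B' := by
          rw [pick, dif_pos hex]
          exact hex.choose_spec
        rw [hwcong, ← hwitn, Function.update_eq_self] at hpick
        right
        exact hpick
      · -- universal step
        have hb' : pref.getD n true = true := by revert hb; cases pref.getD n true <;> simp
        rw [Bform_succ pref P n hnlen, if_pos hb'] at hIH
        have hle : Formula.val I μ (.all n B') ≤ Formula.val I μ B' := by
          have h0 : Formula.val I μ (.all n B') = ⨅ d, Formula.val I (Function.update μ n d) B' :=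
            rfl
          rw [h0]
          refine le_trans (iInf_le _ (μ n)) ?_
          rw [Function.update_eq_self]
        rw [MvalG_succ_univ pref (Qv I) z n (by rw [hb']; decide)]
        rcases hIH with h | h
        · left
          exact le_antisymm (ui_le_one _) (le_trans h.symm.le hle)
        · right
          exact lt_of_lt_of_le h hle

lemma wit_final (pref : List Bool) (P : Formula S) (I : Interp S)
    (hclosed : ∀ v ∈ P.freeVars, v < pref.length)
    (h1 : ∃ μ0 : ℕ → I.D, Formula.val I μ0 (buildPrenex pref 0 P) = 1) (z : ℕ → I.D × ℕ) :
    MvalG pref (Qv I) z pref.length ≤ Formula.val I (wit pref P I z) P := by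
  have h := wit_invariant pref P I hclosed h1 pref.length (le_refl _) z
  rw [Bform_length] at h
  rcases h with h | h
  · rw [h]; exact ui_le_one _
  · exact le_of_lt h

/-! ### the expanded interpretation -/

/-- Skolem function interpretation: reconstructs the witness from its arguments. -/
noncomputable def skFun (pref : List Bool) (P : Formula S) (I : Interp S) (n : ℕ)
    (a : ℕ → I.D × ℕ) : I.D × ℕ :=
  (wit pref P I (fun i => if i = n then a 0 else if i < n then a (i+1) else a 0) n, 0)

section Expanded

variable (q : S.Pred) (hq : S.pArity q = 1) (m : ℕ) (pref : Fin (m+1) → List Bool)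
  (P : Fin (m+1) → Formula S) (skf : Fin (m+1) → ℕ → S.Func) (I : Interp S)

/-- the expanded interpretation over `I.D × ℕ`. -/
@[reducible] noncomputable def Ip : Interp S where
  D := I.D × ℕ
  dNe := ⟨(Classical.choice I.dNe, 0)⟩
  fI g args :=
    if h : ∃ p : Fin (m+1) × ℕ, p.2 ∈ exPos (pref p.1) ∧ skf p.1 p.2 = g then
      skFun (pref h.choose.1) (P h.choose.1) I h.choose.2
        (fun t => if ht : t < S.fArity g then args ⟨t, ht⟩ else (Classical.choice I.dNe, 0))
    else (I.fI g (fun i => (args i).1), 0)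
  pI p args :=
    if hp : p = q then Qv I (args ⟨0, by rw [hp, hq]; omega⟩)
    else I.pI p (fun i => (args i).1)

lemma Ip_D : (Ip q hq m pref P skf I).D = (I.D × ℕ) := rfl

lemma Ip_pI_q (args : Fin (S.pArity q) → I.D × ℕ) :
    (Ip q hq m pref P skf I).pI q args = Qv I (args ⟨0, by rw [hq]; omega⟩) := dif_pos rfl

lemma Ip_pI_ne (p : S.Pred) (hp : p ≠ q) (args : Fin (S.pArity p) → I.D × ℕ) :
    (Ip q hq m pref P skf I).pI p args = I.pI p (fun i => (args i).1) := dif_neg hp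

lemma Ip_fI_fresh (g : S.Func)
    (h : ¬ ∃ p : Fin (m+1) × ℕ, p.2 ∈ exPos (pref p.1) ∧ skf p.1 p.2 = g)
    (args : Fin (S.fArity g) → I.D × ℕ) :
    (Ip q hq m pref P skf I).fI g args = (I.fI g (fun i => (args i).1), 0) := dif_neg h

lemma Ip_fI_sk
    (hinj : ∀ i i', ∀ j ∈ exPos (pref i), ∀ j' ∈ exPos (pref i'),
      skf i j = skf i' j' → i = i' ∧ j = j')
    (c : Fin (m+1)) (n : ℕ) (hn : n ∈ exPos (pref c))
    (args : Fin (S.fArity (skf c n)) → I.D × ℕ) :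
    (Ip q hq m pref P skf I).fI (skf c n) args =
      skFun (pref c) (P c) I n
        (fun t => if ht : t < S.fArity (skf c n) then args ⟨t, ht⟩
          else (Classical.choice I.dNe, 0)) := by
  have hex : ∃ p : Fin (m+1) × ℕ, p.2 ∈ exPos (pref p.1) ∧ skf p.1 p.2 = skf c n :=
    ⟨(c, n), hn, rfl⟩
  show (if h : _ then _ else _) = _
  rw [dif_pos hex]
  obtain ⟨h1, h2⟩ := hex.choose_spec
  obtain ⟨e1, e2⟩ := hinj hex.choose.1 c hex.choose.2 h1 n hn h2
  rw [e1, e2]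

lemma term_hom
    (z : ℕ → I.D × ℕ) (t : Term S)
    (hfreshT : ∀ g ∈ t.funcsIn,
      ¬ ∃ p : Fin (m+1) × ℕ, p.2 ∈ exPos (pref p.1) ∧ skf p.1 p.2 = g) :
    (t.eval (Ip q hq m pref P skf I) z).1 = t.eval I (fun i => (z i).1) := by
  induction t with
  | var n => rfl
  | func f args ih =>
      show ((Ip q hq m pref P skf I).fI f _).1 = _
      rw [Ip_fI_fresh q hq m pref P skf I f
        (hfreshT f (Set.mem_insert f _))]
      show I.fI f (fun i => ((args i).eval (Ip q hq m pref P skf I) z).1) = _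
      congr 1
      funext i
      exact ih i fun g hg => hfreshT g (Set.mem_insert_iff.mpr (Or.inr (Set.mem_iUnion.mpr ⟨i, hg⟩)))

lemma val_hom (z : ℕ → I.D × ℕ) (A : Formula S) (hA : A.isQF) (hqA : q ∉ A.predsIn)
    (hfA : ∀ g ∈ A.funcsIn,
      ¬ ∃ p : Fin (m+1) × ℕ, p.2 ∈ exPos (pref p.1) ∧ skf p.1 p.2 = g) :
    A.val (Ip q hq m pref P skf I) z = A.val I (fun i => (z i).1) := by
  induction A with
  | bot => rfl
  | top => rfl
  | atom p args =>
      show (Ip q hq m pref P skf I).pI p _ = _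
      have hp : p ≠ q := fun h => hqA (h ▸ Set.mem_singleton p)
      rw [Ip_pI_ne q hq m pref P skf I p hp]
      show I.pI p (fun i => ((args i).eval (Ip q hq m pref P skf I) z).1) = _
      congr 1
      funext i
      exact term_hom q hq m pref P skf I z (args i)
        (fun g hg => hfA g (Set.mem_iUnion.mpr ⟨i, hg⟩))
  | and A B ihA ihB =>
      show min _ _ = min _ _
      rw [ihA hA.1 (fun h => hqA (Or.inl h)) (fun g hg => hfA g (Or.inl hg)),
        ihB hA.2 (fun h => hqA (Or.inr h)) (fun g hg => hfA g (Or.inr hg))]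
  | or A B ihA ihB =>
      show max _ _ = max _ _
      rw [ihA hA.1 (fun h => hqA (Or.inl h)) (fun g hg => hfA g (Or.inl hg)),
        ihB hA.2 (fun h => hqA (Or.inr h)) (fun g hg => hfA g (Or.inr hg))]
  | imp A B ihA ihB =>
      show gimp _ _ = gimp _ _
      rw [ihA hA.1 (fun h => hqA (Or.inl h)) (fun g hg => hfA g (Or.inl hg)),
        ihB hA.2 (fun h => hqA (Or.inr h)) (fun g hg => hfA g (Or.inr hg))]
  | delta A ihA =>
      show gdelta _ = gdelta _
      rw [ihA hA hqA hfA]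
  | all x A ihA => exact absurd hA id
  | ex x A ihA => exact absurd hA id

end Expanded

section Forward

variable (q : S.Pred) (hq : S.pArity q = 1) (m : ℕ) (pref : Fin (m+1) → List Bool)
  (P : Fin (m+1) → Formula S) (skf : Fin (m+1) → ℕ → S.Func) (I : Interp S)

lemma Ip_QI_eq_Qv : (fun d => (Ip q hq m pref P skf I).pI q fun _ => d) = Qv I := by
  funext d
  rw [Ip_pI_q q hq m pref P skf I (fun _ => d)]

lemma exQ_val_one (z : ℕ → I.D × ℕ) :
    Formula.val (Ip q hq m pref P skf I) z (exQ q) = 1 := by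
  show (⨆ d, Formula.val (Ip q hq m pref P skf I) (Function.update z 0 d) (qAtom q (.var 0))) = 1
  have h0 : ∀ d : I.D × ℕ, Formula.val (Ip q hq m pref P skf I)
      (Function.update z 0 d) (qAtom q (.var 0)) = Qv I d := by
    intro d
    show (Ip q hq m pref P skf I).pI q (fun _ => Function.update z 0 d 0) = Qv I d
    rw [Ip_pI_q q hq m pref P skf I]
    rw [Function.update_self]
  simp only [h0]
  exact iSup_Qv I

lemma forward_conjunct
    (harity : ∀ i, ∀ j ∈ exPos (pref i), S.fArity (skf i j) = j + 1)
    (hfresh : ∀ i k, ∀ j ∈ exPos (pref i), skf i j ∉ (P k).funcsIn)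
    (hinj : ∀ i i', ∀ j ∈ exPos (pref i), ∀ j' ∈ exPos (pref i'),
      skf i j = skf i' j' → i = i' ∧ j = j')
    (c : Fin (m+1)) (hQF : (P c).isQF)
    (hclosed : ∀ v ∈ (P c).freeVars, v < (pref c).length)
    (hqfresh : q ∉ (P c).predsIn)
    (h1 : ∃ μ0 : ℕ → I.D, Formula.val I μ0 (buildPrenex (pref c) 0 (P c)) = 1)
    (z : ℕ → I.D × ℕ) :
    Formula.val (Ip q hq m pref P skf I) z (skq q (skf c) (pref c) (P c)) = 1 := by
  show Formula.val (Ip q hq m pref P skf I) z (allCloseList _ _) = 1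
  rw [allCloseList_val_eq_one_iff]
  intro μ' _
  rw [delta_guards_val_eq_one_iff]
  have hval : ∀ i, Formula.val (Ip q hq m pref P skf I) μ' (qAtom q (.var i)) =
      (fun d => (Ip q hq m pref P skf I).pI q fun _ => d) (μ' i) := fun i => rfl
  rw [MvalG_length_eq_exPos (Ip q hq m pref P skf I) q μ' (pref c) hval,
    Ip_QI_eq_Qv q hq m pref P skf I]
  rw [Formula.val_subst (Ip q hq m pref P skf I) μ' _ (P c) hQF]
  have hfA : ∀ g ∈ (P c).funcsIn,
      ¬ ∃ p : Fin (m+1) × ℕ, p.2 ∈ exPos (pref p.1) ∧ skf p.1 p.2 = g := by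
    rintro g hg ⟨p, hp, he⟩
    exact hfresh p.1 c p.2 hp (he ▸ hg)
  rw [val_hom q hq m pref P skf I _ (P c) hQF hqfresh hfA]
  have hwit : (fun n =>
        ((Term.eval (Ip q hq m pref P skf I) μ' (skSubstSatQ (pref c) (skf c) n))).1)
      = wit (pref c) (P c) I μ' := by
    funext n
    by_cases hb : (pref c).getD n true = false
    · have hnex : n ∈ exPos (pref c) := ex_of_getD_false (pref c) n hb
      have har := harity c n hnex
      show ((Term.eval (Ip q hq m pref P skf I) μ' (skSubstSatQ (pref c) (skf c) n))).1 = _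
      unfold skSubstSatQ
      rw [if_pos hb]
      show (((Ip q hq m pref P skf I).fI (skf c n) _)).1 = _
      rw [Ip_fI_sk q hq m pref P skf I hinj c n hnex]
      show wit (pref c) (P c) I _ n = _
      refine wit_congr (pref c) (P c) I _ μ' n fun j hj => ?_
      by_cases hjn : j = n
      · subst hjn
        simp only [if_pos rfl]
        rw [dif_pos (show 0 < S.fArity (skf c j) by omega)]
        show Term.eval (Ip q hq m pref P skf I) μ' (Term.var _) = μ' j
        simp only [Term.eval]
        norm_num
      · simp only [hjn, if_false, show j < n by omega, if_true]
        rw [dif_pos (show j + 1 < S.fArity (skf c n) by omega)]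
        show Term.eval (Ip q hq m pref P skf I) μ' (Term.var _) = μ' j
        simp only [Term.eval]
        norm_num
    · show ((Term.eval (Ip q hq m pref P skf I) μ' (skSubstSatQ (pref c) (skf c) n))).1 = _
      unfold skSubstSatQ
      rw [if_neg hb, wit_eq (pref c) (P c) I μ' n, if_neg hb]
      rfl
  rw [hwit]
  exact wit_final (pref c) (P c) I hclosed h1 μ'

end Forward

/-! ### free variables of the Skolemized matrix -/

lemma guards_freeVars (q : S.Pred) (L : List ℕ) (B : Formula S) :
    (guards q L B).freeVars ⊆ {v | v ∈ L} ∪ B.freeVars := by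
  induction L with
  | nil => exact fun v hv => Or.inr hv
  | cons i xs ih =>
      intro v hv
      rcases hv with hv | hv
      · simp only [qAtom, Formula.freeVars, Set.mem_iUnion, Term.vars,
          Set.mem_singleton_iff] at hv
        obtain ⟨_, rfl⟩ := hv
        exact Or.inl (by simp)
      · rcases ih hv with h | h
        · exact Or.inl (by simp_all)
        · exact Or.inr h

lemma matrix_freeVars (q : S.Pred) (pref : List Bool) (P : Formula S) (skf : ℕ → S.Func)
    (hQF : P.isQF) (hclosed : ∀ v ∈ P.freeVars, v < pref.length)
    (harity : ∀ j ∈ exPos pref, S.fArity (skf j) = j + 1) :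
    ∀ v ∈ (Formula.delta (guards q (exPos pref)
      (P.subst (skSubstSatQ pref skf)))).freeVars, v < pref.length := by
  intro v hv
  have hv' : v ∈ (guards q (exPos pref) (P.subst (skSubstSatQ pref skf))).freeVars := hv
  rcases guards_freeVars q _ _ hv' with h | h
  · exact ((mem_exPos pref v).mp h).1
  · obtain ⟨w, hw, hvw⟩ := Set.mem_iUnion₂.mp (Formula.freeVars_subst _ P hQF h)
    have h1 := vars_skSubst pref skf harity w v hvw
    have h2 := hclosed w hw
    omega

/-! ### the main theorem -/

theorem sat_skolemization_step1' (q : S.Pred) (hq : S.pArity q = 1)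
    (m : ℕ) (pref : Fin (m + 1) → List Bool) (P : Fin (m + 1) → Formula S)
    (hQF : ∀ i, (P i).isQF)
    (hclosed : ∀ i, ∀ v ∈ (P i).freeVars, v < (pref i).length)
    (hqfresh : ∀ i, q ∉ (P i).predsIn)
    (skf : Fin (m + 1) → ℕ → S.Func)
    (harity : ∀ i, ∀ j ∈ exPos (pref i), S.fArity (skf i j) = j + 1)
    (hfresh : ∀ i k, ∀ j ∈ exPos (pref i), skf i j ∉ (P k).funcsIn)
    (hinj : ∀ i i', ∀ j ∈ exPos (pref i), ∀ j' ∈ exPos (pref i'),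
      skf i j = skf i' j' → i = i' ∧ j = j') :
    sat1 (bigAnd (buildPrenex (pref 0) 0 (P 0))
        (List.ofFn (fun i : Fin m => buildPrenex (pref i.succ) 0 (P i.succ)))) ↔
      sat1 (Formula.and (exQ q)
        (bigAnd (skq q (skf 0) (pref 0) (P 0))
          (List.ofFn (fun i : Fin m => skq q (skf i.succ) (pref i.succ) (P i.succ))))) := by
  constructor
  · rintro ⟨I, μ, hval⟩
    rw [bigAnd_val_eq_one_iff] at hval
    obtain ⟨h0, htail⟩ := hval
    have hA : ∀ c : Fin (m+1), Formula.val I μ (buildPrenex (pref c) 0 (P c)) = 1 := by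
      intro c
      refine Fin.cases h0 (fun i => ?_) c
      exact htail _ ((List.mem_ofFn' _ _).mpr (Set.mem_range.mpr ⟨i, rfl⟩))
    refine ⟨Ip q hq m pref P skf I, fun _ => (Classical.choice I.dNe, 0), ?_⟩
    show min _ _ = 1
    rw [ui_min_eq_one_iff]
    refine ⟨exQ_val_one q hq m pref P skf I _, ?_⟩
    rw [bigAnd_val_eq_one_iff]
    constructor
    · exact forward_conjunct q hq m pref P skf I harity hfresh hinj 0 (hQF 0) (hclosed 0)
        (hqfresh 0) ⟨μ, hA 0⟩ _
    · intro B hB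
      obtain ⟨i, rfl⟩ := Set.mem_range.mp ((List.mem_ofFn' _ _).mp hB)
      exact forward_conjunct q hq m pref P skf I harity hfresh hinj i.succ (hQF i.succ)
        (hclosed i.succ) (hqfresh i.succ) ⟨μ, hA i.succ⟩ _
  · rintro ⟨I, z, hval⟩
    have hval' : Formula.val I z (exQ q) = 1 ∧
        Formula.val I z (bigAnd (skq q (skf 0) (pref 0) (P 0))
          (List.ofFn (fun i : Fin m => skq q (skf i.succ) (pref i.succ) (P i.succ)))) = 1 := by
      have h : min (Formula.val I z (exQ q))
          (Formula.val I z (bigAnd (skq q (skf 0) (pref 0) (P 0))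
            (List.ofFn (fun i : Fin m => skq q (skf i.succ) (pref i.succ) (P i.succ))))) = 1 :=
        hval
      exact (ui_min_eq_one_iff _ _).mp h
    have supQ : (⨆ d : I.D, I.pI q fun _ => d) = 1 := by
      rw [← hval'.1]
      show (⨆ d, I.pI q fun _ => d) =
        ⨆ d, Formula.val I (Function.update z 0 d) (qAtom q (.var 0))
      congr 1
    have h2 := hval'.2
    rw [bigAnd_val_eq_one_iff] at h2
    have hsk : ∀ c : Fin (m+1), Formula.val I z (skq q (skf c) (pref c) (P c)) = 1 := by
      intro c
      refine Fin.cases h2.1 (fun i => ?_) c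
      exact h2.2 _ ((List.mem_ofFn' _ _).mpr (Set.mem_range.mpr ⟨i, rfl⟩))
    have hmat : ∀ c : Fin (m+1), ∀ z' : ℕ → I.D, Formula.val I z'
        (.delta (guards q (exPos (pref c)) ((P c).subst (skSubstSatQ (pref c) (skf c))))) = 1 := by
      intro c z'
      have h := (allCloseList_val_eq_one_iff I z (List.range (pref c).length) _).mp (hsk c)
      set μ'' : ℕ → I.D := fun i => if i < (pref c).length then z' i else z i with hμ''
      have hagree : ∀ i, i ∉ List.range (pref c).length → μ'' i = z i := by
        intro i hi
        rw [List.mem_range] at hi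
        simp [hμ'', hi]
      have hm := h μ'' hagree
      rw [← hm]
      refine Formula.val_congr I _ fun v hv => ?_
      have hvlt := matrix_freeVars q (pref c) (P c) (skf c) (hQF c) (hclosed c) (harity c) v hv
      simp [hμ'', hvlt]
    refine ⟨I, z, ?_⟩
    rw [bigAnd_val_eq_one_iff]
    constructor
    · exact backward_conjunct I q (pref 0) (P 0) (skf 0) (hQF 0) (hclosed 0) (harity 0)
        supQ (hmat 0) z
    · intro B hB
      obtain ⟨i, rfl⟩ := Set.mem_range.mp ((List.mem_ofFn' _ _).mp hB)
      exact backward_conjunct I q (pref i.succ) (P i.succ) (skf i.succ) (hQF i.succ)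
        (hclosed i.succ) (harity i.succ) supQ (hmat i.succ) z

end SK
/-- SAT-Skolemization, step 1: for closed prenex formulas `A₁,…,Aₘ`
(prefix `pref i`, quantifier-free matrix `P i`) and a fresh monadic predicate symbol `q`,
the conjunction `A₁ ∧ ⋯ ∧ Aₘ` is 1-satisfiable iff
`∃x q(x) ∧ sk_q(A₁) ∧ ⋯ ∧ sk_q(Aₘ)` is 1-satisfiable; the Skolem function symbols
`skf i j` are fresh (pairwise distinct and not occurring in any matrix) and of the
correct arity. -/
theorem sat_skolemization_step1 (S : Signature) (q : S.Pred) (hq : S.pArity q = 1)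
    (m : ℕ) (pref : Fin (m + 1) → List Bool) (P : Fin (m + 1) → Formula S)
    (hQF : ∀ i, (P i).isQF)
    (hclosed : ∀ i, ∀ v ∈ (P i).freeVars, v < (pref i).length)
    (hqfresh : ∀ i, q ∉ (P i).predsIn)
    (skf : Fin (m + 1) → ℕ → S.Func)
    (harity : ∀ i, ∀ j ∈ exPos (pref i), S.fArity (skf i j) = j + 1)
    (hfresh : ∀ i k, ∀ j ∈ exPos (pref i), skf i j ∉ (P k).funcsIn)
    (hinj : ∀ i i', ∀ j ∈ exPos (pref i), ∀ j' ∈ exPos (pref i'),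
      skf i j = skf i' j' → i = i' ∧ j = j') :
    sat1 (bigAnd (buildPrenex (pref 0) 0 (P 0))
        (List.ofFn (fun i : Fin m => buildPrenex (pref i.succ) 0 (P i.succ)))) ↔
      sat1 (Formula.and (exQ q)
        (bigAnd (skq q (skf 0) (pref 0) (P 0))
          (List.ofFn (fun i : Fin m => skq q (skf i.succ) (pref i.succ) (P i.succ))))) :=
  sat_skolemization_step1' q hq m pref P hQF hclosed hqfresh skf harity hfresh hinj
end
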